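/- arXiv:1303.6150 — 5 statements merged into one kernel-verified Lean document; each statement's English description precedes it below -/
import Mathlib

section
/- Let E be a Banach space, f : E → E a C¹ vector field, and c : [0,b) → E (with 0 < b < ∞) a maximal integral curve of f (i.e., c'(t) = f(c(t)) for all t). If there exists a sequence tₙ → b⁻ such that c(tₙ) converges in E, then c extends to an integral curve of f on an interval strictly containing [0,b). -/
open Set Filter Metric

/-- If a maximal integral curve `c : [0,b) → E` of a `C¹` vector field `f` on a Banach space
has a sequence `tₙ → b⁻` with `c tₙ` convergent, then `c` extends as an integral curve
beyond `b`. -/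
theorem stmt_0 {E : Type*} [NormedAddCommGroup E] [NormedSpace ℝ E] [CompleteSpace E]
    (f : E → E) (hf : ContDiff ℝ 1 f) (b : ℝ) (hb : 0 < b)
    (c : ℝ → E) (hc : ∀ t ∈ Set.Ico (0:ℝ) b, HasDerivAt c (f (c t)) t)
    (t : ℕ → ℝ) (ht : ∀ n, t n ∈ Set.Ico (0:ℝ) b)
    (htb : Filter.Tendsto t Filter.atTop (nhds b))
    (L : E) (hL : Filter.Tendsto (fun n => c (t n)) Filter.atTop (nhds L)) :
    ∃ b' > b, ∃ c' : ℝ → E,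
      (∀ s ∈ Set.Ico (0:ℝ) b, c' s = c s) ∧
      ∀ s ∈ Set.Ico (0:ℝ) b', HasDerivAt c' (f (c' s)) s := by
  have hcont : ∀ s ∈ Set.Ico (0:ℝ) b, ContinuousAt c s := fun s hs => (hc s hs).continuousAt
  -- A bound on `f` near `L`.
  obtain ⟨M, hMpos, r, hr, hfr⟩ :
      ∃ M : ℝ, 0 < M ∧ ∃ r > 0, ∀ x, dist x L ≤ r → ‖f x‖ ≤ M := by
    refine ⟨‖f L‖ + 1, by positivity, ?_⟩
    obtain ⟨δ, hδ, h⟩ := Metric.continuousAt_iff.1 (hf.continuous.continuousAt (x := L)) 1 one_pos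
    refine ⟨δ / 2, by positivity, fun x hx => ?_⟩
    have h1 := h (show dist x L < δ by linarith)
    have h2 : ‖f x‖ - ‖f L‖ ≤ ‖f x - f L‖ := norm_sub_norm_le _ _
    rw [← dist_eq_norm] at h2
    linarith
  -- Mean value estimate while the curve stays in the ball.
  have key : ∀ u v : ℝ, 0 ≤ u → u ≤ v → v < b →
      (∀ x ∈ Set.Icc u v, dist (c x) L ≤ r) → dist (c v) (c u) ≤ M * (v - u) := by
    intro u v hu huv hvb hball
    have h := norm_image_sub_le_of_norm_deriv_le_segment'
      (f := c) (f' := fun x => f (c x)) (a := u) (b := v) (C := M)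
      (fun x hx => (hc x ⟨le_trans hu hx.1, lt_of_le_of_lt hx.2 hvb⟩).hasDerivWithinAt)
      (fun x hx => hfr _ (hball x (Set.Ico_subset_Icc_self hx)))
      v (Set.right_mem_Icc.2 huv)
    rwa [dist_eq_norm]
  -- Choose a starting time `τ`.
  have hev : ∀ᶠ n in Filter.atTop,
      dist (c (t n)) L < r / 2 ∧ b - t n < r / (2 * M) := by
    have e1 : ∀ᶠ n in Filter.atTop, dist (c (t n)) L < r / 2 :=
      (Metric.tendsto_nhds.1 hL) _ (by positivity)
    have e2 : Filter.Tendsto (fun n => b - t n) Filter.atTop (nhds 0) := by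
      simpa using htb.const_sub b
    exact e1.and (e2.eventually (eventually_lt_nhds (by positivity)))
  obtain ⟨n₀, hn₀1, hn₀2⟩ := hev.exists
  set τ : ℝ := t n₀ with hτdef
  have hτ : τ ∈ Set.Ico (0:ℝ) b := ht n₀
  -- The curve stays in the closed ball of radius `r` on `[τ, b)`.
  have claimA : ∀ u ∈ Set.Ico τ b, dist (c u) L ≤ r := by
    by_contra hcon
    push_neg at hcon
    obtain ⟨w, hw, hrw⟩ := hcon
    set B := {u | u ∈ Set.Ico τ b ∧ r < dist (c u) L} with hB
    have hBne : B.Nonempty := ⟨w, hw, hrw⟩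
    have hBbdd : BddBelow B := ⟨τ, fun u hu => hu.1.1⟩
    set u₀ := sInf B with hu₀def
    have hu₀τ : τ ≤ u₀ := le_csInf hBne fun u hu => hu.1.1
    have hu₀b : u₀ < b := lt_of_le_of_lt (csInf_le hBbdd ⟨hw, hrw⟩) hw.2
    have hu₀mem : u₀ ∈ Set.Ico (0:ℝ) b := ⟨le_trans hτ.1 hu₀τ, hu₀b⟩
    have hcc : ContinuousAt c u₀ := hcont _ hu₀mem
    have hge : r ≤ dist (c u₀) L := by
      by_contra hlt
      push_neg at hlt
      have hevlt : ∀ᶠ x in nhds u₀, dist (c x) L < r :=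
        hcc.eventually_mem (Metric.isOpen_ball.mem_nhds (by rwa [Metric.mem_ball]))
      obtain ⟨η, hη, hball⟩ := Metric.eventually_nhds_iff.1 hevlt
      obtain ⟨u, huB, huu⟩ := exists_lt_of_csInf_lt hBne (lt_add_of_pos_right u₀ hη)
      have h1 : u₀ ≤ u := csInf_le hBbdd huB
      have h2 : dist u u₀ < η := by rw [Real.dist_eq, abs_of_nonneg (by linarith)]; linarith
      exact absurd (hball h2) (not_lt.2 huB.2.le)
    have hτu₀ : τ < u₀ := by
      rcases eq_or_lt_of_le hu₀τ with h | h
      · exact absurd hge (by rw [← h]; linarith)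
      · exact h
    have hin : ∀ u ∈ Set.Ico τ u₀, dist (c u) L ≤ r := by
      intro u hu
      by_contra h
      push_neg at h
      exact absurd (csInf_le hBbdd ⟨⟨hu.1, lt_trans hu.2 hu₀b⟩, h⟩) (not_le.2 hu.2)
    have hmv : ∀ v ∈ Set.Ico τ u₀, dist (c v) (c τ) ≤ M * (u₀ - τ) := by
      intro v hv
      have h1 := key τ v hτ.1 hv.1 (lt_trans hv.2 hu₀b)
        (fun x hx => hin x ⟨hx.1, lt_of_le_of_lt hx.2 hv.2⟩)
      nlinarith [hv.2.le]
    have hlim : dist (c u₀) (c τ) ≤ M * (u₀ - τ) := by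
      have hne : (nhdsWithin u₀ (Set.Ico τ u₀)).NeBot := by
        rw [← mem_closure_iff_nhdsWithin_neBot, closure_Ico (ne_of_lt hτu₀)]
        exact Set.right_mem_Icc.2 hτu₀.le
      refine le_of_tendsto (((hcc.continuousWithinAt (s := Set.Ico τ u₀)).tendsto).dist tendsto_const_nhds) ?_
      exact Filter.eventually_of_mem self_mem_nhdsWithin fun v hv => hmv v hv
    have hd : dist (c u₀) L ≤ dist (c u₀) (c τ) + dist (c τ) L := dist_triangle _ _ _
    have hsm : M * (u₀ - τ) < r / 2 := by
      have h1 : u₀ - τ < r / (2 * M) := by linarith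
      have h2 : M * (u₀ - τ) < M * (r / (2 * M)) := by
        exact mul_lt_mul_of_pos_left h1 hMpos
      have h3 : M * (r / (2 * M)) = r / 2 := by field_simp
      linarith
    have hfin : dist (c u₀) L < r :=
      calc dist (c u₀) L ≤ dist (c u₀) (c τ) + dist (c τ) L := hd
        _ < r / 2 + r / 2 := add_lt_add (lt_of_le_of_lt hlim hsm) hn₀1
        _ = r := by ring
    exact absurd hfin (not_lt.2 hge)
  -- `c` tends to `L` as `t → b⁻`.
  have htendL : Filter.Tendsto c (nhdsWithin b (Set.Iio b)) (nhds L) := by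
    rw [Metric.tendsto_nhds]
    intro ε hε
    have hev2 : ∀ᶠ n in Filter.atTop,
        τ ≤ t n ∧ dist (c (t n)) L < ε / 2 ∧ b - t n < ε / (2 * M) := by
      have e0 : ∀ᶠ n in Filter.atTop, τ ≤ t n := htb.eventually (eventually_ge_nhds hτ.2)
      have e1 : ∀ᶠ n in Filter.atTop, dist (c (t n)) L < ε / 2 :=
        (Metric.tendsto_nhds.1 hL) _ (by positivity)
      have e2 : Filter.Tendsto (fun n => b - t n) Filter.atTop (nhds 0) := by
        simpa using htb.const_sub b
      exact e0.and (e1.and (e2.eventually (eventually_lt_nhds (by positivity))))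
    obtain ⟨n, h1, h2, h3⟩ := hev2.exists
    filter_upwards [Ioo_mem_nhdsLT_of_mem (Set.mem_Ioc.2 ⟨(ht n).2, le_rfl⟩)] with s hs
    have hd : dist (c s) (c (t n)) ≤ M * (s - t n) :=
      key (t n) s (ht n).1 hs.1.le hs.2
        (fun x hx => claimA x ⟨le_trans h1 hx.1, lt_of_le_of_lt hx.2 hs.2⟩)
    have hsm : M * (s - t n) < ε / 2 := by
      have hA : M * (s - t n) ≤ M * (b - t n) := by nlinarith [hs.2.le]
      have hB : M * (b - t n) < M * (ε / (2 * M)) := mul_lt_mul_of_pos_left h3 hMpos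
      have hC : M * (ε / (2 * M)) = ε / 2 := by field_simp
      linarith
    calc dist (c s) L ≤ dist (c s) (c (t n)) + dist (c (t n)) L := dist_triangle _ _ _
      _ < ε / 2 + ε / 2 := add_lt_add (lt_of_le_of_lt hd hsm) h2
      _ = ε := by ring
  -- Local solution `α` at `(b, L)`.
  obtain ⟨α, hα0, ε, hε, hαd⟩ := (hf.contDiffAt (x := L)).exists_forall_mem_closedBall_exists_eq_forall_mem_Ioo_hasDerivAt₀ b
  -- Local Lipschitz bound for `f` near `L`.
  obtain ⟨K, sK, hsK, hKlip⟩ := (hf.contDiffAt (x := L)).exists_lipschitzOnWith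
  obtain ⟨rK, hrK, hrKs⟩ := Metric.mem_nhds_iff.1 hsK
  have hK' : LipschitzOnWith K f (Metric.ball L rK) := hKlip.mono hrKs
  -- `c` is in the ball near `b`.
  have hcball : c ⁻¹' Metric.ball L rK ∈ nhdsWithin b (Set.Iio b) :=
    htendL (Metric.ball_mem_nhds L hrK)
  obtain ⟨a₁, ha₁, hsub₁⟩ := mem_nhdsLT_iff_exists_Ioo_subset.1 hcball
  -- `α` is in the ball near `b`.
  have hαcont : ContinuousAt α b := (hαd b ⟨by linarith, by linarith⟩).continuousAt
  obtain ⟨η, hη, hball₂⟩ := Metric.continuousAt_iff.1 hαcont rK hrK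
  -- Choose `δ`.
  set δ : ℝ := min (min (ε / 2) b) (min ((b - a₁) / 2) (η / 2)) with hδdef
  have ha₁b : a₁ < b := ha₁
  have hδpos : 0 < δ := by
    apply lt_min (lt_min (by positivity) hb) (lt_min (by linarith) (by positivity))
  have hδε : δ < ε := lt_of_le_of_lt (le_trans (min_le_left _ _) (min_le_left _ _)) (by linarith)
  have hδb : δ ≤ b := le_trans (min_le_left _ _) (min_le_right _ _)
  have hδa₁ : a₁ < b - δ := by
    have h := le_trans (min_le_right (min (ε / 2) b) (min ((b - a₁) / 2) (η / 2)))
      (min_le_left ((b - a₁) / 2) (η / 2))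
    rw [← hδdef] at h
    linarith
  have hδη : δ < η := by
    have h := le_trans (min_le_right (min (ε / 2) b) (min ((b - a₁) / 2) (η / 2)))
      (min_le_right ((b - a₁) / 2) (η / 2))
    rw [← hδdef] at h
    linarith
  -- The extension of `c` to `b`.
  set cext : ℝ → E := fun s => if s < b then c s else L with hcextdef
  have hcextb : cext b = L := if_neg (lt_irrefl b)
  have hcexteq : ∀ s, s < b → cext s = c s := fun s hs => if_pos hs
  have hcextev : ∀ x, x < b → cext =ᶠ[nhds x] c := by
    intro x hx
    filter_upwards [Iio_mem_nhds hx] with y hy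
    exact hcexteq y hy
  have hderiv_cext : ∀ x ∈ Set.Ico (0:ℝ) b, HasDerivAt cext (f (cext x)) x := by
    intro x hx
    have h := (hc x hx).congr_of_eventuallyEq (hcextev x hx.2)
    rwa [hcexteq x hx.2]
  -- Tendsto of `cext` within `Iio b`.
  have htendcext : Filter.Tendsto cext (nhdsWithin b (Set.Iio b)) (nhds L) := by
    refine htendL.congr' ?_
    filter_upwards [self_mem_nhdsWithin] with x hx
    exact (hcexteq x hx).symm
  have htendle : Filter.Tendsto cext (nhdsWithin b (Set.Iic b)) (nhds L) := by
    rw [← Set.Iio_union_right, nhdsWithin_union, Filter.tendsto_sup]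
    refine ⟨htendcext, ?_⟩
    rw [nhdsWithin_singleton]
    have := tendsto_pure_nhds cext b
    rwa [hcextb] at this
  -- Endpoint derivative of `cext` at `b`.
  have hend : HasDerivWithinAt cext (f (cext b)) (Set.Iic b) b := by
    rw [hcextb]
    apply hasDerivWithinAt_Iic_of_tendsto_deriv (s := Set.Ioo 0 b)
    · intro x hx
      exact (hderiv_cext x ⟨hx.1.le, hx.2⟩).differentiableAt.differentiableWithinAt
    · have : Filter.Tendsto cext (nhdsWithin b (Set.Ioo 0 b)) (nhds L) :=
        htendcext.mono_left (nhdsWithin_mono b Set.Ioo_subset_Iio_self)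
      rwa [ContinuousWithinAt, hcextb]
    · exact Ioo_mem_nhdsLT_of_mem (Set.mem_Ioc.2 ⟨hb, le_rfl⟩)
    · have h1 : Filter.Tendsto (fun x => f (c x)) (nhdsWithin b (Set.Iio b)) (nhds (f L)) :=
        (hf.continuous.continuousAt.tendsto).comp htendL
      refine h1.congr' ?_
      filter_upwards [Ioo_mem_nhdsLT_of_mem (Set.mem_Ioc.2 ⟨hb, le_rfl⟩)] with x hx
      exact ((hderiv_cext x ⟨hx.1.le, hx.2⟩).deriv.trans (by rw [hcexteq x hx.2])).symm
  -- Uniqueness: `cext = α` on `[b - δ, b]`.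
  have huniq : Set.EqOn cext α (Set.Icc (b - δ) b) := by
    apply ODE_solution_unique_of_mem_Icc_left
      (v := fun _ => f) (s := fun _ => Metric.ball L rK) (K := K) (fun _ _ => hK')
    · -- continuity of cext
      intro x hx
      rcases lt_or_eq_of_le hx.2 with h | h
      · exact (hderiv_cext x ⟨by linarith [hx.1], h⟩).continuousAt.continuousWithinAt
      · have h2 : Filter.Tendsto cext (nhdsWithin b (Set.Icc (b - δ) b)) (nhds L) :=
          htendle.mono_left (nhdsWithin_mono b Set.Icc_subset_Iic_self)
        have h3 : ContinuousWithinAt cext (Set.Icc (b - δ) b) b := by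
          rw [ContinuousWithinAt, hcextb]; exact h2
        rw [h]; exact h3
    · -- derivative of cext
      intro x hx
      rcases lt_or_eq_of_le hx.2 with h | h
      · exact (hderiv_cext x ⟨by linarith [hx.1], h⟩).hasDerivWithinAt
      · subst h; exact hend
    · -- cext stays in ball
      intro x hx
      rcases lt_or_eq_of_le hx.2 with h | h
      · rw [hcexteq x h]
        exact hsub₁ ⟨lt_of_lt_of_le hδa₁ hx.1.le, h⟩
      · subst h; rw [hcextb]; exact Metric.mem_ball_self hrK
    · -- continuity of α
      intro x hx
      exact (hαd x ⟨by linarith [hx.1], by linarith [hx.2]⟩).continuousAt.continuousWithinAt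
    · -- derivative of α
      intro x hx
      exact (hαd x ⟨by linarith [hx.1], by linarith [hx.2]⟩).hasDerivWithinAt
    · -- α stays in ball
      intro x hx
      have hd : dist x b < η := by
        rw [Real.dist_eq, abs_of_nonpos (by linarith [hx.2])]
        linarith [hx.1]
      have := hball₂ hd
      rw [hα0] at this
      exact Metric.mem_ball.2 this
    · rw [hcextb, hα0]
  -- Define the extension and conclude.
  refine ⟨b + ε, by linarith, fun s => if s < b then c s else α s, fun s hs => if_pos hs.2, ?_⟩
  set c' : ℝ → E := fun s => if s < b then c s else α s with hc'def
  have hc'eqα : ∀ x ∈ Set.Ioo (b - δ) (b + ε), c' x = α x := by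
    intro x hx
    by_cases hxb : x < b
    · have h1 : cext x = α x := huniq ⟨hx.1.le, hxb.le⟩
      rw [show c' x = c x from if_pos hxb, ← hcexteq x hxb, h1]
    · exact if_neg hxb
  intro s hs
  rcases lt_or_ge s b with h | h
  · -- s < b
    have hev : c' =ᶠ[nhds s] c := by
      filter_upwards [Iio_mem_nhds h] with y hy
      exact if_pos hy
    have hd := (hc s ⟨hs.1, h⟩).congr_of_eventuallyEq hev
    rwa [show c' s = c s from if_pos h]
  · -- b ≤ s
    have hmem : s ∈ Set.Ioo (b - δ) (b + ε) := ⟨by linarith, hs.2⟩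
    have hd : HasDerivAt α (f (α s)) s := hαd s ⟨by linarith, hs.2⟩
    have hev : c' =ᶠ[nhds s] α := by
      filter_upwards [isOpen_Ioo.mem_nhds hmem] with y hy
      exact hc'eqα y hy
    have := hd.congr_of_eventuallyEq hev
    rwa [hc'eqα s hmem]
end

section
/- Let E be a Banach space and X : E → E a C¹ vector field satisfying a linear growth bound ‖X(p)‖ ≤ C₀ + C₁‖p‖ for all p ∈ E, with constants C₀, C₁ > 0. Then every maximal integral curve of X is defined on all of ℝ, i.e., X is a complete vector field. -/
open Set Filter Topology

section Aux

variable {E : Type*} [NormedAddCommGroup E] [NormedSpace ℝ E] {X : E → E}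

/-- Local uniqueness of integral curves of a `C¹` vector field. -/
private lemma ode_eventuallyEq (hX : ContDiff ℝ 1 X) {t₀ : ℝ} {f g : ℝ → E}
    (hf : ∀ᶠ t in 𝓝 t₀, HasDerivAt f (X (f t)) t)
    (hg : ∀ᶠ t in 𝓝 t₀, HasDerivAt g (X (g t)) t)
    (heq : f t₀ = g t₀) : f =ᶠ[𝓝 t₀] g := by
  obtain ⟨K, U, hU, hlip⟩ := (hX.contDiffAt (x := f t₀)).exists_lipschitzOnWith
  have hfc : ContinuousAt f t₀ := hf.self_of_nhds.continuousAt
  have hgc : ContinuousAt g t₀ := hg.self_of_nhds.continuousAt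
  have hfU : ∀ᶠ t in 𝓝 t₀, f t ∈ U := hfc.eventually_mem hU
  have hgU : ∀ᶠ t in 𝓝 t₀, g t ∈ U := hgc.eventually_mem (heq ▸ hU)
  exact ODE_solution_unique_of_eventually (v := fun _ x => X x) (s := fun _ => U)
    (Filter.Eventually.of_forall fun _ => hlip) (hf.and hfU) (hg.and hgU) heq

/-- Uniqueness of integral curves of a `C¹` vector field on an open interval. -/
private lemma ode_eqOn_Ioo (hX : ContDiff ℝ 1 X) {a b t₀ : ℝ} {f g : ℝ → E}
    (ht₀ : t₀ ∈ Ioo a b)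
    (hf : ∀ t ∈ Ioo a b, HasDerivAt f (X (f t)) t)
    (hg : ∀ t ∈ Ioo a b, HasDerivAt g (X (g t)) t)
    (heq : f t₀ = g t₀) : EqOn f g (Ioo a b) := by
  set u := {t | f t = g t} ∩ Ioo a b with hu
  suffices hsub : Ioo a b ⊆ u from fun t ht => ((hsub ht).1 : f t = g t)
  apply isPreconnected_Ioo.subset_of_closure_inter_subset (u := u) ?_ ⟨t₀, ht₀, heq, ht₀⟩
  · -- closure u ∩ Ioo a b ⊆ u
    rintro t ⟨htc, ht⟩
    refine ⟨?_, ht⟩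
    have hne : (𝓝[u] t).NeBot := mem_closure_iff_nhdsWithin_neBot.mp htc
    have h1 : Tendsto f (𝓝[u] t) (𝓝 (f t)) :=
      ((hf t ht).continuousAt.tendsto).mono_left nhdsWithin_le_nhds
    have h2 : Tendsto g (𝓝[u] t) (𝓝 (g t)) :=
      ((hg t ht).continuousAt.tendsto).mono_left nhdsWithin_le_nhds
    have h3 : Tendsto f (𝓝[u] t) (𝓝 (g t)) := by
      refine h2.congr' ?_
      filter_upwards [self_mem_nhdsWithin] with s hs
      exact hs.1.symm
    exact tendsto_nhds_unique h1 h3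
  · -- u is open
    rw [isOpen_iff_mem_nhds]
    rintro t ⟨hteq, ht⟩
    have hmem := Ioo_mem_nhds ht.1 ht.2
    have heqv : f =ᶠ[𝓝 t] g :=
      ode_eventuallyEq hX (eventually_of_mem hmem hf) (eventually_of_mem hmem hg) hteq
    filter_upwards [heqv, hmem] with s hs1 hs2
    exact ⟨hs1, hs2⟩

/-- Two integral curves through the same initial point agree where both are defined. -/
private lemma sol_coherence (hX : ContDiff ℝ 1 X) {t₀ : ℝ} {x₀ : E} {T T' : ℝ}
    (hT : 0 < T) (hT' : 0 < T') {f g : ℝ → E} (hf0 : f t₀ = x₀) (hg0 : g t₀ = x₀)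
    (hf : ∀ t ∈ Ioo (t₀ - T) (t₀ + T), HasDerivAt f (X (f t)) t)
    (hg : ∀ t ∈ Ioo (t₀ - T') (t₀ + T'), HasDerivAt g (X (g t)) t)
    {s : ℝ} (hsf : |s - t₀| < T) (hsg : |s - t₀| < T') : f s = g s := by
  set m := min T T' with hm
  have hm0 : 0 < m := lt_min hT hT'
  have hmT : m ≤ T := min_le_left T T'
  have hmT' : m ≤ T' := min_le_right T T'
  have h1 : ∀ t ∈ Ioo (t₀ - m) (t₀ + m), HasDerivAt f (X (f t)) t := fun t ht =>
    hf t ⟨by linarith [ht.1], by linarith [ht.2]⟩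
  have h2 : ∀ t ∈ Ioo (t₀ - m) (t₀ + m), HasDerivAt g (X (g t)) t := fun t ht =>
    hg t ⟨by linarith [ht.1], by linarith [ht.2]⟩
  have h3 := ode_eqOn_Ioo hX (t₀ := t₀) ⟨by linarith, by linarith⟩ h1 h2 (hf0.trans hg0.symm)
  apply h3
  rw [abs_sub_lt_iff] at hsf hsg
  have e1 := lt_min hsf.1 hsg.1
  have e2 := lt_min hsf.2 hsg.2
  exact ⟨by linarith, by linarith⟩

/-- Gluing a compatible family of local integral curves into one on `Ioo (t₀-b) (t₀+b)`. -/
private lemma glue_Ioo (hX : ContDiff ℝ 1 X) {t₀ b : ℝ} {x₀ : E} (hb : 0 < b)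
    (h : ∀ T, 0 < T → T < b → ∃ f : ℝ → E, f t₀ = x₀ ∧
      ∀ t ∈ Ioo (t₀ - T) (t₀ + T), HasDerivAt f (X (f t)) t) :
    ∃ g : ℝ → E, g t₀ = x₀ ∧ ∀ t ∈ Ioo (t₀ - b) (t₀ + b), HasDerivAt g (X (g t)) t := by
  choose! F hF0 hF using h
  set τ : ℝ → ℝ := fun t => (|t - t₀| + b) / 2 with hτdef
  refine ⟨fun t => F (τ t) t, ?_, ?_⟩
  · show F (τ t₀) t₀ = x₀
    have : τ t₀ = b / 2 := by simp [hτdef]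
    rw [this]
    exact hF0 _ (by positivity) (by linarith)
  · intro t ht
    have htb : |t - t₀| < b := abs_sub_lt_iff.mpr ⟨by linarith [ht.2], by linarith [ht.1]⟩
    have h1 : |t - t₀| < τ t := by simp only [hτdef]; linarith
    have h2 : τ t < b := by simp only [hτdef]; linarith
    have h3 : 0 < τ t := lt_of_le_of_lt (abs_nonneg _) h1
    have key : ∀ s, |s - t₀| < τ t → F (τ s) s = F (τ t) s := by
      intro s hs
      have hsb : |s - t₀| < b := lt_trans hs h2
      have hs1 : |s - t₀| < τ s := by simp only [hτdef]; linarith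
      have hs2 : τ s < b := by simp only [hτdef]; linarith
      have hs3 : 0 < τ s := lt_of_le_of_lt (abs_nonneg _) hs1
      exact sol_coherence hX hs3 h3 (hF0 _ hs3 hs2) (hF0 _ h3 h2)
        (hF _ hs3 hs2) (hF _ h3 h2) hs1 hs
    have heqv : (fun s => F (τ s) s) =ᶠ[𝓝 t] F (τ t) := by
      filter_upwards [Metric.ball_mem_nhds t (show (0:ℝ) < τ t - |t - t₀| by linarith)] with s hs
      apply key s
      have habs : |s - t₀| ≤ |s - t| + |t - t₀| := abs_sub_le _ _ _
      rw [Metric.mem_ball, Real.dist_eq] at hs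
      linarith
    have hd : HasDerivAt (F (τ t)) (X (F (τ t) t)) t := by
      apply hF _ h3 h2
      rw [abs_sub_lt_iff] at h1
      exact ⟨by linarith [h1.2], by linarith [h1.1]⟩
    exact heqv.hasDerivAt_iff.mpr hd

/-- Gluing a compatible family of local integral curves into a global one. -/
private lemma glue_global (hX : ContDiff ℝ 1 X) {t₀ : ℝ} {x₀ : E}
    (h : ∀ T, 0 < T → ∃ f : ℝ → E, f t₀ = x₀ ∧
      ∀ t ∈ Ioo (t₀ - T) (t₀ + T), HasDerivAt f (X (f t)) t) :
    ∃ g : ℝ → E, g t₀ = x₀ ∧ ∀ t, HasDerivAt g (X (g t)) t := by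
  choose! F hF0 hF using h
  set τ : ℝ → ℝ := fun t => |t - t₀| + 1 with hτdef
  have hτpos : ∀ t, 0 < τ t := fun t => by positivity
  have hτgt : ∀ t, |t - t₀| < τ t := fun t => by simp only [hτdef]; linarith [abs_nonneg (t - t₀)]
  refine ⟨fun t => F (τ t) t, ?_, ?_⟩
  · exact hF0 _ (hτpos t₀)
  · intro t
    have key : ∀ s, |s - t₀| < τ t → F (τ s) s = F (τ t) s := fun s hs =>
      sol_coherence hX (hτpos s) (hτpos t) (hF0 _ (hτpos s)) (hF0 _ (hτpos t))
        (hF _ (hτpos s)) (hF _ (hτpos t)) (hτgt s) hs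
    have heqv : (fun s => F (τ s) s) =ᶠ[𝓝 t] F (τ t) := by
      filter_upwards [Metric.ball_mem_nhds t
        (show (0:ℝ) < τ t - |t - t₀| by linarith [hτgt t])] with s hs
      apply key s
      have habs : |s - t₀| ≤ |s - t| + |t - t₀| := abs_sub_le _ _ _
      rw [Metric.mem_ball, Real.dist_eq] at hs
      linarith
    have hd : HasDerivAt (F (τ t)) (X (F (τ t) t)) t := by
      apply hF _ (hτpos t)
      have := hτgt t
      rw [abs_sub_lt_iff] at this
      exact ⟨by linarith [this.2], by linarith [this.1]⟩
    exact heqv.hasDerivAt_iff.mpr hd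

private lemma gronwallBound_mono' {δ K ε : ℝ} (hδ : 0 ≤ δ) (hK : 0 < K) (hε : 0 ≤ ε)
    {x y : ℝ} (h : x ≤ y) : gronwallBound δ K ε x ≤ gronwallBound δ K ε y := by
  rw [gronwallBound_of_K_ne_0 hK.ne']
  dsimp only
  have h1 : Real.exp (K * x) ≤ Real.exp (K * y) :=
    Real.exp_le_exp.2 (mul_le_mul_of_nonneg_left h hK.le)
  have h2 : 0 ≤ ε / K := div_nonneg hε hK.le
  nlinarith

end Aux

section Extend

variable {E : Type*} [NormedAddCommGroup E] [NormedSpace ℝ E] [CompleteSpace E] {X : E → E}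

/-- An integral curve of a `C¹` vector field with linear growth on a bounded open interval
extends past the right endpoint. -/
private lemma extend_right (hX : ContDiff ℝ 1 X) {C₀ C₁ : ℝ}
    (hC₀ : 0 ≤ C₀) (hC₁ : 0 < C₁) (hgrowth : ∀ p, ‖X p‖ ≤ C₀ + C₁ * ‖p‖)
    {a b : ℝ} (hab : a < b) {f : ℝ → E}
    (hf : ∀ t ∈ Ioo a b, HasDerivAt f (X (f t)) t) :
    ∃ ε > 0, ∃ g : ℝ → E, EqOn g f (Ioo a b) ∧
      ∀ t ∈ Ioo a (b + ε), HasDerivAt g (X (g t)) t := by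
  set m := (a + b) / 2 with hm
  have ham : a < m := by simp only [hm]; linarith
  have hmb : m < b := by simp only [hm]; linarith
  -- a priori bound from Grönwall's inequality
  set B := gronwallBound ‖f m‖ C₁ C₀ (b - m) with hB
  have hbound : ∀ t ∈ Ico m b, ‖f t‖ ≤ B := by
    intro t ht
    have hcont : ContinuousOn f (Icc m t) := fun u hu =>
      ((hf u ⟨lt_of_lt_of_le ham hu.1, lt_of_le_of_lt hu.2 ht.2⟩).continuousAt).continuousWithinAt
    have hderiv : ∀ u ∈ Ico m t, HasDerivWithinAt f (X (f u)) (Ici u) u := fun u hu =>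
      ((hf u ⟨lt_of_lt_of_le ham hu.1, lt_trans hu.2 ht.2⟩)).hasDerivWithinAt
    have hgb : ∀ u ∈ Ico m t, ‖X (f u)‖ ≤ C₁ * ‖f u‖ + C₀ := fun u _ => by
      have := hgrowth (f u); linarith
    have := norm_le_gronwallBound_of_norm_deriv_right_le hcont hderiv le_rfl hgb t
      ⟨ht.1, le_rfl⟩
    calc ‖f t‖ ≤ gronwallBound ‖f m‖ C₁ C₀ (t - m) := this
      _ ≤ B := gronwallBound_mono' (norm_nonneg _) hC₁ hC₀ (by linarith [ht.2])
  have hBnn : 0 ≤ B := le_trans (norm_nonneg (f m)) (hbound m ⟨le_rfl, hmb⟩)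
  set M := C₀ + C₁ * B with hMdef
  have hM : 0 ≤ M := by positivity
  -- Lipschitz estimate
  have hlip : ∀ s ∈ Ico m b, ∀ t ∈ Ico m b, ‖f t - f s‖ ≤ M * ‖t - s‖ := by
    intro s hs t ht
    refine Convex.norm_image_sub_le_of_norm_hasDerivWithin_le
      (f' := fun u => X (f u))
      (fun u hu => (hf u ⟨lt_of_lt_of_le ham hu.1, hu.2⟩).hasDerivWithinAt)
      (fun u hu => ?_) (convex_Ico m b) hs ht
    have h1 := hgrowth (f u)
    have h2 := hbound u hu
    have h3 : C₁ * ‖f u‖ ≤ C₁ * B := mul_le_mul_of_nonneg_left h2 hC₁.le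
    simp only [hMdef]
    linarith
  -- the limit at the right endpoint exists
  have hneBot : (𝓝[<] b).NeBot := nhdsLT_neBot b
  have hcauchy : Cauchy (map f (𝓝[<] b)) := by
    rw [cauchy_map_iff]
    refine ⟨hneBot, ?_⟩
    rw [Metric.uniformity_basis_dist.tendsto_right_iff]
    intro ε hε
    have hδ : 0 < ε / (M + 1) := by positivity
    set δ := ε / (M + 1) with hδdef
    have hmax : max m (b - δ) < b := max_lt hmb (by linarith)
    have hmem : Ioo (max m (b - δ)) b ∈ 𝓝[<] b := Ioo_mem_nhdsLT hmax
    filter_upwards [prod_mem_prod hmem hmem] with p hp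
    obtain ⟨hp1, hp2⟩ := hp
    have e1 : p.1 ∈ Ico m b := ⟨le_trans (le_max_left _ _) hp1.1.le, hp1.2⟩
    have e2 : p.2 ∈ Ico m b := ⟨le_trans (le_max_left _ _) hp2.1.le, hp2.2⟩
    have k1 : b - δ < p.1 := lt_of_le_of_lt (le_max_right _ _) hp1.1
    have k2 : b - δ < p.2 := lt_of_le_of_lt (le_max_right _ _) hp2.1
    have h12 : |p.2 - p.1| < δ := abs_sub_lt_iff.mpr ⟨by linarith [hp2.2], by linarith [hp1.2]⟩
    have hle : ‖f p.2 - f p.1‖ ≤ M * ‖p.2 - p.1‖ := hlip _ e1 _ e2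
    have hMδ : M * (ε / (M + 1)) < ε := by
      rw [mul_div_assoc']
      rw [div_lt_iff₀ (by linarith)]
      nlinarith
    calc dist (f p.1) (f p.2) = ‖f p.2 - f p.1‖ := by rw [dist_eq_norm, norm_sub_rev]
      _ ≤ M * ‖p.2 - p.1‖ := hle
      _ ≤ M * δ := mul_le_mul_of_nonneg_left (by rw [Real.norm_eq_abs]; exact h12.le) hM
      _ < ε := hMδ
  obtain ⟨y, hy⟩ := CompleteSpace.complete hcauchy
  have hy : Tendsto f (𝓝[<] b) (𝓝 y) := hy
  -- continuous extension to the closed interval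
  set g1 : ℝ → E := fun t => if t < b then f t else y with hg1def
  have hg1f : EqOn g1 f (Ioo a b) := fun t ht => if_pos ht.2
  have hg1y : g1 b = y := if_neg (lt_irrefl b)
  have hg1sol : ∀ t ∈ Ioo a b, HasDerivAt g1 (X (g1 t)) t := by
    intro t ht
    have heqv : g1 =ᶠ[𝓝 t] f := by
      filter_upwards [Iio_mem_nhds ht.2] with s hs
      exact if_pos hs
    rw [hg1f ht]
    exact heqv.hasDerivAt_iff.mpr (hf t ht)
  have hg1cont : ContinuousOn g1 (Icc m b) := by
    intro t ht
    rcases eq_or_lt_of_le ht.2 with rfl | htb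
    · have h1 : Tendsto g1 (𝓝[<] t) (𝓝 (g1 t)) := by
        rw [hg1y]
        refine hy.congr' ?_
        filter_upwards [self_mem_nhdsWithin] with s hs
        exact (if_pos hs).symm
      have h3 : Tendsto g1 (𝓝[Iic t] t) (𝓝 (g1 t)) := by
        rw [← Iio_union_right, nhdsWithin_union]
        rw [tendsto_sup]
        refine ⟨h1, ?_⟩
        rw [nhdsWithin_singleton]
        exact tendsto_pure_nhds g1 t
      exact h3.mono_left (nhdsWithin_mono _ Icc_subset_Iic_self)
    · exact ((hg1sol t ⟨lt_of_lt_of_le ham ht.1, htb⟩).continuousAt).continuousWithinAt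
  have hXg1cont : ContinuousOn (fun s => X (g1 s)) (Icc m b) :=
    hX.continuous.comp_continuousOn hg1cont
  have hint : IntervalIntegrable (fun s => X (g1 s)) MeasureTheory.volume m b := by
    apply ContinuousOn.intervalIntegrable
    rwa [uIcc_of_le hmb.le]
  -- the integral equation, up to and including the right endpoint
  have heqIco : ∀ t ∈ Ico m b, g1 t = g1 m + ∫ s in m..t, X (g1 s) := by
    intro t ht
    have hieq : ∫ s in m..t, X (g1 s) = g1 t - g1 m := by
      apply intervalIntegral.integral_eq_sub_of_hasDerivAt
      · intro u hu
        rw [uIcc_of_le ht.1] at hu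
        exact hg1sol u ⟨lt_of_lt_of_le ham hu.1, lt_of_le_of_lt hu.2 ht.2⟩
      · apply ContinuousOn.intervalIntegrable
        apply hXg1cont.mono
        rw [uIcc_of_le ht.1]
        exact Icc_subset_Icc le_rfl ht.2.le
    rw [hieq]
    abel
  have hprim : ∀ t ∈ Icc m b, g1 t = g1 m + ∫ s in m..t, X (g1 s) := by
    intro t ht
    rcases eq_or_lt_of_le ht.2 with rfl | htb
    · have hcl : t ∈ closure (Ico m t) := by
        rw [closure_Ico hmb.ne]
        exact ⟨hmb.le, le_rfl⟩
      have hne : (𝓝[Ico m t] t).NeBot := mem_closure_iff_nhdsWithin_neBot.mp hcl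
      have hlhs : Tendsto g1 (𝓝[Ico m t] t) (𝓝 (g1 t)) :=
        (hg1cont t ht).mono_left (nhdsWithin_mono _ Ico_subset_Icc_self)
      have hic : ContinuousOn (fun u => ∫ s in m..u, X (g1 s)) (Icc m t) := by
        have h0 : MeasureTheory.IntegrableOn (fun s => X (g1 s)) (uIcc m t)
            MeasureTheory.volume := by
          rw [uIcc_of_le hmb.le]
          exact hXg1cont.integrableOn_Icc
        have := intervalIntegral.continuousOn_primitive_interval h0
        rwa [uIcc_of_le hmb.le] at this
      have hrhs : Tendsto (fun u => g1 m + ∫ s in m..u, X (g1 s)) (𝓝[Ico m t] t)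
          (𝓝 (g1 m + ∫ s in m..t, X (g1 s))) :=
        ((continuousOn_const.add hic) t ht).mono_left
          (nhdsWithin_mono _ Ico_subset_Icc_self)
      have hlhs' : Tendsto g1 (𝓝[Ico m t] t) (𝓝 (g1 m + ∫ s in m..t, X (g1 s))) := by
        refine hrhs.congr' ?_
        filter_upwards [self_mem_nhdsWithin] with s hs
        exact (heqIco s hs).symm
      exact tendsto_nhds_unique hlhs hlhs'
    · exact heqIco t ⟨ht.1, htb⟩
  -- one-sided derivative at the right endpoint
  have hderivb : HasDerivWithinAt g1 (X (g1 b)) (Iic b) b := by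
    have hmeas : StronglyMeasurableAtFilter (fun s => X (g1 s))
        (𝓝[Iic b] b) MeasureTheory.volume :=
      ⟨Icc m b, Icc_mem_nhdsLE hmb, hXg1cont.aestronglyMeasurable measurableSet_Icc⟩
    have hcw : ContinuousWithinAt (fun s => X (g1 s)) (Iic b) b :=
      (hXg1cont b ⟨hmb.le, le_rfl⟩).mono_of_mem_nhdsWithin (Icc_mem_nhdsLE hmb)
    have hFTC : HasDerivWithinAt (fun u => ∫ s in m..u, X (g1 s)) (X (g1 b)) (Iic b) b :=
      intervalIntegral.integral_hasDerivWithinAt_right hint hmeas hcw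
    have hFTC' : HasDerivWithinAt (fun u => g1 m + ∫ s in m..u, X (g1 s)) (X (g1 b))
        (Icc m b) b := (hFTC.mono Icc_subset_Iic_self).const_add _
    have := hFTC'.congr (fun u hu => hprim u hu) (hprim b ⟨hmb.le, le_rfl⟩)
    exact this.mono_of_mem_nhdsWithin (Icc_mem_nhdsLE hmb)
  -- local solution starting at the right endpoint, and gluing
  obtain ⟨h2, hh2b, ε, hε, hh2⟩ :=
    ContDiffAt.exists_forall_mem_closedBall_exists_eq_forall_mem_Ioo_hasDerivAt₀ (hX.contDiffAt (x := y)) b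
  have hyb : h2 b = g1 b := by rw [hh2b, hg1y]
  set G : ℝ → E := fun t => if t ≤ b then g1 t else h2 t with hGdef
  refine ⟨ε, hε, G, ?_, ?_⟩
  · intro t ht
    have : G t = g1 t := if_pos ht.2.le
    rw [this]
    exact hg1f ht
  · intro t ht
    rcases lt_trichotomy t b with htb | rfl | htb
    · have heqv : G =ᶠ[𝓝 t] g1 := by
        filter_upwards [Iio_mem_nhds htb] with s hs
        exact if_pos hs.le
      have : G t = g1 t := if_pos htb.le
      rw [this]
      exact heqv.hasDerivAt_iff.mpr (hg1sol t ⟨ht.1, htb⟩)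
    · have hleft : HasDerivWithinAt G (X (g1 t)) (Iic t) t :=
        hderivb.congr (fun s hs => if_pos hs) (if_pos le_rfl)
      have hright : HasDerivWithinAt G (X (g1 t)) (Ici t) t := by
        have hd : HasDerivAt h2 (X (h2 t)) t := hh2 t ⟨by linarith, by linarith⟩
        rw [hyb] at hd
        refine hd.hasDerivWithinAt.congr (fun s hs => ?_) ?_
        · rcases eq_or_lt_of_le (mem_Ici.mp hs : t ≤ s) with rfl | hlt
          · exact (if_pos le_rfl).trans hyb.symm
          · exact if_neg (not_le.mpr hlt)
        · exact (if_pos le_rfl).trans hyb.symm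
      have hcomb := hleft.union hright
      rw [Iic_union_Ici, hasDerivWithinAt_univ] at hcomb
      have : G t = g1 t := if_pos le_rfl
      rw [this]
      exact hcomb
    · have heqv : G =ᶠ[𝓝 t] h2 := by
        filter_upwards [Ioi_mem_nhds htb] with s hs
        exact if_neg (not_le.mpr hs)
      have : G t = h2 t := if_neg (not_le.mpr htb)
      rw [this]
      exact heqv.hasDerivAt_iff.mpr (hh2 t ⟨by linarith, ht.2⟩)

end Extend

section Main

variable {E : Type*} [NormedAddCommGroup E] [NormedSpace ℝ E] [CompleteSpace E] {X : E → E}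

/-- Time-reversed version of `extend_right`. -/
private lemma extend_left (hX : ContDiff ℝ 1 X) {C₀ C₁ : ℝ}
    (hC₀ : 0 ≤ C₀) (hC₁ : 0 < C₁) (hgrowth : ∀ p, ‖X p‖ ≤ C₀ + C₁ * ‖p‖)
    {a b : ℝ} (hab : a < b) {f : ℝ → E}
    (hf : ∀ t ∈ Ioo a b, HasDerivAt f (X (f t)) t) :
    ∃ ε > 0, ∃ g : ℝ → E, EqOn g f (Ioo a b) ∧
      ∀ t ∈ Ioo (a - ε) b, HasDerivAt g (X (g t)) t := by
  set Y : E → E := fun p => -X p with hYdef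
  have hYd : ContDiff ℝ 1 Y := hX.neg
  have hYg : ∀ p, ‖Y p‖ ≤ C₀ + C₁ * ‖p‖ := fun p => by
    simpa [hYdef] using hgrowth p
  have hrev : ∀ s ∈ Ioo (-b) (-a), HasDerivAt (fun u => f (-u)) (Y (f (-s))) s := by
    intro s hs
    have h1 : HasDerivAt f (X (f (-s))) (-s) := hf (-s) ⟨by linarith [hs.2], by linarith [hs.1]⟩
    have h2 := HasDerivAt.scomp_of_eq s h1 (hasDerivAt_neg' s) rfl
    simpa [hYdef, Function.comp_def] using h2
  obtain ⟨ε, hε, G, hGeq, hGsol⟩ := extend_right hYd hC₀ hC₁ hYg (neg_lt_neg hab) hrev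
  refine ⟨ε, hε, fun t => G (-t), ?_, ?_⟩
  · intro t ht
    have := hGeq (show -t ∈ Ioo (-b) (-a) from ⟨by linarith [ht.2], by linarith [ht.1]⟩)
    simpa using this
  · intro t ht
    have hms : -t ∈ Ioo (-b) (-a + ε) := ⟨by linarith [ht.2], by linarith [ht.1]⟩
    have h1 := hGsol (-t) hms
    have h2 := HasDerivAt.scomp_of_eq t h1 (hasDerivAt_neg' t) rfl
    simpa [hYdef, Function.comp_def] using h2

/-- Global existence of integral curves of a `C¹` vector field with linear growth. -/
private lemma global_ivp (hX : ContDiff ℝ 1 X) {C₀ C₁ : ℝ}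
    (hC₀ : 0 ≤ C₀) (hC₁ : 0 < C₁) (hgrowth : ∀ p, ‖X p‖ ≤ C₀ + C₁ * ‖p‖)
    (t₀ : ℝ) (x₀ : E) :
    ∃ f : ℝ → E, f t₀ = x₀ ∧ ∀ t, HasDerivAt f (X (f t)) t := by
  set A : Set ℝ := {T | 0 < T ∧ ∃ f : ℝ → E, f t₀ = x₀ ∧
    ∀ t ∈ Ioo (t₀ - T) (t₀ + T), HasDerivAt f (X (f t)) t} with hA
  have hAne : A.Nonempty := by
    obtain ⟨f, hf0, ε, hε, hf⟩ :=
      ContDiffAt.exists_forall_mem_closedBall_exists_eq_forall_mem_Ioo_hasDerivAt₀ (hX.contDiffAt (x := x₀)) t₀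
    exact ⟨ε, hε, f, hf0, hf⟩
  have hdown : ∀ T ∈ A, ∀ T', 0 < T' → T' ≤ T → T' ∈ A := by
    rintro T ⟨hT, f, hf0, hf⟩ T' h1 h2
    exact ⟨h1, f, hf0, fun t ht => hf t ⟨by linarith [ht.1], by linarith [ht.2]⟩⟩
  by_cases hbdd : BddAbove A
  · -- bounded case: contradiction with maximality
    exfalso
    set S := sSup A with hS
    obtain ⟨ε₀, hε₀⟩ := id hAne
    have hS0 : 0 < S := lt_of_lt_of_le hε₀.1 (le_csSup hbdd hε₀)
    have hsmall : ∀ T, 0 < T → T < S → T ∈ A := by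
      intro T h1 h2
      obtain ⟨T', hT', hlt⟩ := exists_lt_of_lt_csSup hAne h2
      exact hdown T' hT' T h1 hlt.le
    obtain ⟨g, hg0, hg⟩ := glue_Ioo hX hS0 (fun T h1 h2 => (hsmall T h1 h2).2)
    obtain ⟨ε₁, hε₁, g1, hg1eq, hg1⟩ := extend_right hX hC₀ hC₁ hgrowth
      (show t₀ - S < t₀ + S by linarith) hg
    obtain ⟨ε₂, hε₂, g2, hg2eq, hg2⟩ := extend_left hX hC₀ hC₁ hgrowth
      (show t₀ - S < t₀ + S + ε₁ by linarith) hg1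
    set ε := min ε₁ ε₂ with hεdef
    have hεpos : 0 < ε := lt_min hε₁ hε₂
    have hmem : S + ε ∈ A := by
      refine ⟨by linarith, g2, ?_, ?_⟩
      · have e1 : g2 t₀ = g1 t₀ := hg2eq ⟨by linarith, by linarith⟩
        have e2 : g1 t₀ = g t₀ := hg1eq ⟨by linarith, by linarith⟩
        rw [e1, e2, hg0]
      · intro t ht
        apply hg2
        have l1 : ε ≤ ε₁ := min_le_left _ _
        have l2 : ε ≤ ε₂ := min_le_right _ _
        exact ⟨by linarith [ht.1], by linarith [ht.2]⟩
    have := le_csSup hbdd hmem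
    linarith
  · -- unbounded case: glue solutions on arbitrarily large intervals
    have hall : ∀ T, 0 < T → ∃ f : ℝ → E, f t₀ = x₀ ∧
        ∀ t ∈ Ioo (t₀ - T) (t₀ + T), HasDerivAt f (X (f t)) t := by
      intro T hT
      obtain ⟨T', hT'A, hTT'⟩ := not_bddAbove_iff.mp hbdd T
      exact (hdown T' hT'A T hT hTT'.le).2
    exact glue_global hX hall

end Main

/-- A `C¹` vector field on a Banach space with at most linear growth is complete: every integral
curve defined on an open interval extends to an integral curve defined on all of `ℝ`. -/
theorem stmt_4 {E : Type*} [NormedAddCommGroup E] [NormedSpace ℝ E] [CompleteSpace E]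
    (X : E → E) (hX : ContDiff ℝ 1 X)
    (C₀ C₁ : ℝ) (hC₀ : 0 < C₀) (hC₁ : 0 < C₁)
    (hgrowth : ∀ p : E, ‖X p‖ ≤ C₀ + C₁ * ‖p‖)
    (a b : ℝ) (c : ℝ → E)
    (hc : ∀ t ∈ Set.Ioo a b, HasDerivAt c (X (c t)) t) :
    ∃ c' : ℝ → E, (∀ t ∈ Set.Ioo a b, c' t = c t) ∧ ∀ t : ℝ, HasDerivAt c' (X (c' t)) t := by
  rcases lt_or_ge a b with hab | hab
  · set t₀ := (a + b) / 2 with ht₀def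
    have ht₀ : t₀ ∈ Set.Ioo a b := ⟨by simp only [ht₀def]; linarith, by simp only [ht₀def]; linarith⟩
    obtain ⟨f, hf0, hf⟩ := global_ivp hX hC₀.le hC₁ hgrowth t₀ (c t₀)
    exact ⟨f, fun t ht => ode_eqOn_Ioo hX ht₀ (fun s _ => hf s) hc hf0 ht, hf⟩
  · obtain ⟨f, _, hf⟩ := global_ivp hX hC₀.le hC₁ hgrowth 0 0
    refine ⟨f, fun t ht => ?_, hf⟩
    rw [Set.Ioo_eq_empty (not_lt.mpr hab)] at ht
    exact ht.elim
end

section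
/- Let E be a Banach space and X : E → E a C¹ vector field. Suppose there exists a continuous, positive, non-decreasing, locally Lipschitz function α : [0,∞) → ℝ with ∫₀^∞ dx/α(x) = ∞ such that ‖X(p)‖ < α(‖p‖) for all p ∈ E. Then every maximal integral curve of X is defined on all of ℝ. -/
section MyAux


open Set Filter Metric Topology MeasureTheory

variable {E : Type*} [NormedAddCommGroup E] [NormedSpace ℝ E]

/-- Uniqueness of integral curves of a `C¹` vector field on an open interval. -/
lemma my_uniq {X : E → E} (hX : ContDiff ℝ 1 X) {f g : ℝ → E} {a b t₀ : ℝ}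
    (ht₀ : t₀ ∈ Ioo a b)
    (hf : ∀ t ∈ Ioo a b, HasDerivAt f (X (f t)) t)
    (hg : ∀ t ∈ Ioo a b, HasDerivAt g (X (g t)) t)
    (heq : f t₀ = g t₀) : EqOn f g (Ioo a b) := by
  set S : Set ℝ := {t | t ∈ Ioo a b ∧ f t = g t} with hS
  have hSopen : IsOpen S := by
    rw [isOpen_iff_mem_nhds]
    rintro u ⟨huI, hu⟩
    obtain ⟨K, s, hs, hlip⟩ := (hX.contDiffAt (x := f u)).exists_lipschitzOnWith
    have hfc : ContinuousAt f u := (hf u huI).continuousAt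
    have hgc : ContinuousAt g u := (hg u huI).continuousAt
    have hInhds : Ioo a b ∈ 𝓝 u := Ioo_mem_nhds huI.1 huI.2
    have hf' : ∀ᶠ t in 𝓝 u, HasDerivAt f (X (f t)) t ∧ f t ∈ s := by
      filter_upwards [hInhds, hfc.preimage_mem_nhds hs] with t ht hts
      exact ⟨hf t ht, hts⟩
    have hg' : ∀ᶠ t in 𝓝 u, HasDerivAt g (X (g t)) t ∧ g t ∈ s := by
      have : s ∈ 𝓝 (g u) := hu ▸ hs
      filter_upwards [hInhds, hgc.preimage_mem_nhds this] with t ht hts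
      exact ⟨hg t ht, hts⟩
    have := ODE_solution_unique_of_eventually (v := fun _ => X) (s := fun _ => s)
      (Filter.Eventually.of_forall fun _ => hlip) hf' hg' hu
    filter_upwards [hInhds, this] with t ht h2
    exact ⟨ht, h2⟩
  -- clopen argument on the preconnected set Ioo a b
  intro t ht
  by_contra hne
  have hpre : IsPreconnected (Ioo a b : Set ℝ) := isPreconnected_Ioo
  haveI : PreconnectedSpace (Ioo a b : Set ℝ) := Subtype.preconnectedSpace hpre
  set A : Set (Ioo a b : Set ℝ) := Subtype.val ⁻¹' S with hA
  have hAopen : IsOpen A := hSopen.preimage continuous_subtype_val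
  have hfcont : Continuous fun u : (Ioo a b : Set ℝ) => f u - g u := by
    rw [continuous_iff_continuousAt]
    intro u
    exact (((hf u u.2).continuousAt.sub (hg u u.2).continuousAt).comp
      continuous_subtype_val.continuousAt)
  have hAclosed : IsClosed A := by
    have : A = (fun u : (Ioo a b : Set ℝ) => f u - g u) ⁻¹' {0} := by
      ext u
      simp only [hA, hS, mem_preimage, mem_setOf_eq, mem_singleton_iff, sub_eq_zero]
      exact ⟨fun h => h.2, fun h => ⟨u.2, h⟩⟩
    rw [this]
    exact isClosed_singleton.preimage hfcont
  have hAuniv : A = univ := (isClopen_iff.mp ⟨hAclosed, hAopen⟩).resolve_left (by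
    intro h
    have : (⟨t₀, ht₀⟩ : (Ioo a b : Set ℝ)) ∈ A := ⟨ht₀, heq⟩
    simp [h] at this)
  have : (⟨t, ht⟩ : (Ioo a b : Set ℝ)) ∈ A := hAuniv ▸ mem_univ _
  exact hne this.2
section SolSet

variable (X : E → E) (t₀ : ℝ) (x₀ : E)

/-- Times reachable by a local solution through `(t₀, x₀)`. -/
def mySolSet : Set ℝ :=
  {t | ∃ f : ℝ → E, ∃ s e : ℝ, s < t₀ ∧ t₀ < e ∧ s < t ∧ t < e ∧ f t₀ = x₀ ∧
    ∀ u ∈ Ioo s e, HasDerivAt f (X (f u)) u}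

/-- The glued maximal solution. -/
noncomputable def mySol : ℝ → E :=
  fun t => @dite _ (t ∈ mySolSet X t₀ x₀) (Classical.dec _) (fun h => h.choose t) (fun _ => x₀)

variable {X t₀ x₀}

lemma mySol_eq (hX : ContDiff ℝ 1 X) {t : ℝ} (ht : t ∈ mySolSet X t₀ x₀)
    {f : ℝ → E} {s e : ℝ} (hs : s < t₀) (he : t₀ < e) (hst : s < t) (hte : t < e)
    (hft₀ : f t₀ = x₀) (hf : ∀ u ∈ Ioo s e, HasDerivAt f (X (f u)) u) :
    mySol X t₀ x₀ t = f t := by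
  rw [mySol]
  rw [dif_pos ht]
  obtain ⟨s', e', hs', he', hst', hte', hgt₀, hg⟩ := ht.choose_spec
  set g := ht.choose
  -- compare on the intersection interval
  have hsub1 : Ioo (max s s') (min e e') ⊆ Ioo s e :=
    Ioo_subset_Ioo (le_max_left _ _) (min_le_left _ _)
  have hsub2 : Ioo (max s s') (min e e') ⊆ Ioo s' e' :=
    Ioo_subset_Ioo (le_max_right _ _) (min_le_right _ _)
  have ht₀mem : t₀ ∈ Ioo (max s s') (min e e') := ⟨max_lt hs hs', lt_min he he'⟩
  have htmem : t ∈ Ioo (max s s') (min e e') := ⟨max_lt hst hst', lt_min hte hte'⟩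
  exact my_uniq hX ht₀mem (fun u hu => hg u (hsub2 hu)) (fun u hu => hf u (hsub1 hu))
    (hgt₀.trans hft₀.symm) htmem

lemma mySol_eqOn (hX : ContDiff ℝ 1 X) {f : ℝ → E} {s e : ℝ}
    (hs : s < t₀) (he : t₀ < e) (hft₀ : f t₀ = x₀)
    (hf : ∀ u ∈ Ioo s e, HasDerivAt f (X (f u)) u) :
    EqOn (mySol X t₀ x₀) f (Ioo s e) := by
  intro u hu
  exact mySol_eq hX ⟨f, s, e, hs, he, hu.1, hu.2, hft₀, hf⟩ hs he hu.1 hu.2 hft₀ hf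

lemma mySolSet_witness_subset {f : ℝ → E} {s e : ℝ}
    (hs : s < t₀) (he : t₀ < e) (hft₀ : f t₀ = x₀)
    (hf : ∀ u ∈ Ioo s e, HasDerivAt f (X (f u)) u) :
    Ioo s e ⊆ mySolSet X t₀ x₀ :=
  fun u hu => ⟨f, s, e, hs, he, hu.1, hu.2, hft₀, hf⟩

lemma mySol_hasDerivAt (hX : ContDiff ℝ 1 X) {t : ℝ} (ht : t ∈ mySolSet X t₀ x₀) :
    HasDerivAt (mySol X t₀ x₀) (X (mySol X t₀ x₀ t)) t := by
  obtain ⟨f, s, e, hs, he, hst, hte, hft₀, hf⟩ := ht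
  have heq := mySol_eqOn hX hs he hft₀ hf
  have hteq : mySol X t₀ x₀ t = f t := heq ⟨hst, hte⟩
  rw [hteq]
  refine (hf t ⟨hst, hte⟩).congr_of_eventuallyEq ?_
  filter_upwards [Ioo_mem_nhds hst hte] with u hu
  exact heq hu

lemma mySol_self [CompleteSpace E] (hX : ContDiff ℝ 1 X) :
    t₀ ∈ mySolSet X t₀ x₀ ∧ mySol X t₀ x₀ t₀ = x₀ := by
  obtain ⟨f, hft₀, ε, hε, hf⟩ := (hX.contDiffAt (x := x₀)).exists_forall_mem_closedBall_exists_eq_forall_mem_Ioo_hasDerivAt₀ t₀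
  have h1 : t₀ - ε < t₀ := by linarith
  have h2 : t₀ < t₀ + ε := by linarith
  have ht₀ : t₀ ∈ mySolSet X t₀ x₀ := ⟨f, _, _, h1, h2, h1, h2, hft₀, hf⟩
  exact ⟨ht₀, (mySol_eq hX ht₀ h1 h2 h1 h2 hft₀ hf).trans hft₀⟩

end SolSet
set_option maxHeartbeats 1000000 in
lemma my_not_bddAbove [CompleteSpace E] {X : E → E} (hX : ContDiff ℝ 1 X)
    {α : ℝ → ℝ} (hαc : Continuous α)
    (hαpos : ∀ x, 0 ≤ x → 0 < α x)
    (hαmono : ∀ x y, 0 ≤ x → x ≤ y → α x ≤ α y)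
    (hαdiv : Tendsto (fun y => ∫ x in (0:ℝ)..y, (α x)⁻¹) atTop atTop)
    (hbound : ∀ p : E, ‖X p‖ < α ‖p‖) (t₀ : ℝ) (x₀ : E) :
    ¬ BddAbove (mySolSet X t₀ x₀) := by
  intro hbdd
  obtain ⟨ht₀mem, ht₀val⟩ := mySol_self (t₀ := t₀) (x₀ := x₀) hX
  set c := mySol X t₀ x₀ with hcdef
  set T := sSup (mySolSet X t₀ x₀) with hTdef
  obtain ⟨f₀, s₀, e₀, hs₀, he₀, hs₀t, hte₀, hft₀, hf₀⟩ := id ht₀mem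
  have hIoo₀ : Ioo s₀ e₀ ⊆ mySolSet X t₀ x₀ := mySolSet_witness_subset hs₀ he₀ hft₀ hf₀
  have ht₀T : t₀ < T := by
    have hm : (t₀ + e₀)/2 ∈ mySolSet X t₀ x₀ :=
      hIoo₀ ⟨by linarith, by linarith⟩
    have := le_csSup hbdd hm
    linarith
  have hIcoS : Ico t₀ T ⊆ mySolSet X t₀ x₀ := by
    rintro t ⟨ht1, ht2⟩
    rcases eq_or_lt_of_le ht1 with rfl | ht1'
    · exact ht₀mem
    · obtain ⟨u, huS, htu⟩ := exists_lt_of_lt_csSup ⟨t₀, ht₀mem⟩ ht2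
      obtain ⟨f, s, e, hs, he, hsu, hue, hft₀', hf⟩ := huS
      exact mySolSet_witness_subset hs he hft₀' hf ⟨lt_trans hs ht1', htu.trans hue⟩
  set U := Ioo s₀ T with hUdef
  have hUS : U ⊆ mySolSet X t₀ x₀ := by
    rintro u ⟨hu1, hu2⟩
    rcases lt_or_ge u e₀ with h | h
    · exact hIoo₀ ⟨hu1, h⟩
    · exact hIcoS ⟨le_trans he₀.le h, hu2⟩
  have hcderiv : ∀ t ∈ U, HasDerivAt c (X (c t)) t := fun t ht => mySol_hasDerivAt hX (hUS ht)
  have hccont : ContinuousOn c U := fun t ht => (hcderiv t ht).continuousAt.continuousWithinAt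
  have hIcoU : Ico t₀ T ⊆ U := fun t ht => ⟨lt_of_lt_of_le hs₀ ht.1, ht.2⟩
  -- the comparison function
  set w : ℝ → ℝ := fun u => α ‖c u‖ with hwdef
  have hwcont : ContinuousOn w U := (hαc.comp continuous_norm).comp_continuousOn hccont
  have hUmemnhds : ∀ t ∈ U, U ∈ 𝓝 t := fun t ht => isOpen_Ioo.mem_nhds ht
  have ht₀U : t₀ ∈ U := ⟨hs₀, ht₀T⟩
  have huIccU : ∀ t ∈ U, uIcc t₀ t ⊆ U := fun t ht =>
    Set.ordConnected_Ioo.uIcc_subset ht₀U ht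
  have hwint : ∀ t ∈ U, IntervalIntegrable w volume t₀ t := fun t ht =>
    (hwcont.mono (huIccU t ht)).intervalIntegrable
  set v : ℝ → ℝ := fun t => ‖x₀‖ + ∫ u in t₀..t, w u with hvdef
  have hvderiv : ∀ t ∈ U, HasDerivAt v (w t) t := by
    intro t ht
    exact (intervalIntegral.integral_hasDerivAt_right (hwint t ht)
      (hwcont.stronglyMeasurableAtFilter isOpen_Ioo t ht)
      (hwcont.continuousAt (hUmemnhds t ht))).const_add ‖x₀‖
  -- ‖c t‖ ≤ v t on [t₀, T)
  have hcv : ∀ t ∈ Ico t₀ T, ‖c t‖ ≤ v t := by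
    rintro t ⟨ht1, ht2⟩
    have htU : t ∈ U := hIcoU ⟨ht1, ht2⟩
    have hXcc : ContinuousOn (fun u => X (c u)) U := hX.continuous.comp_continuousOn hccont
    have hXc_int : IntervalIntegrable (fun u => X (c u)) volume t₀ t :=
      ((hXcc.mono (huIccU t htU))).intervalIntegrable
    have heqint : (∫ u in t₀..t, X (c u)) = c t - c t₀ :=
      intervalIntegral.integral_eq_sub_of_hasDerivAt
        (fun u hu => hcderiv u (huIccU t htU hu)) hXc_int
    have h1 : ‖c t - c t₀‖ ≤ ∫ u in t₀..t, ‖X (c u)‖ := by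
      rw [← heqint]
      exact intervalIntegral.norm_integral_le_integral_norm ht1
    have h2 : (∫ u in t₀..t, ‖X (c u)‖) ≤ ∫ u in t₀..t, w u := by
      apply intervalIntegral.integral_mono_on ht1 hXc_int.norm (hwint t htU)
      intro u hu
      exact (hbound (c u)).le
    rw [ht₀val] at h1
    have h3 : ‖c t‖ ≤ ‖x₀‖ + ‖c t - x₀‖ := by
      simpa using norm_add_le x₀ (c t - x₀)
    calc ‖c t‖ ≤ ‖x₀‖ + ‖c t - x₀‖ := h3
    _ ≤ ‖x₀‖ + ∫ u in t₀..t, ‖X (c u)‖ := by linarith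
    _ ≤ v t := by simp only [hvdef]; linarith
  have hv0 : ∀ t ∈ Ico t₀ T, ‖x₀‖ ≤ v t := by
    rintro t ⟨ht1, ht2⟩
    have : (0:ℝ) ≤ ∫ u in t₀..t, w u :=
      intervalIntegral.integral_nonneg ht1 (fun u _ => (hαpos _ (norm_nonneg _)).le)
    simp only [hvdef]; linarith
  -- F and its derivative
  set F : ℝ → ℝ := fun y => ∫ x in (0:ℝ)..y, (α x)⁻¹ with hFdef
  set O : Set ℝ := {x | 0 < α x} with hOdef
  have hOopen : IsOpen O := isOpen_lt continuous_const hαc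
  have hOsub : Ici (0:ℝ) ⊆ O := fun x hx => hαpos x hx
  have hicont : ContinuousOn (fun x => (α x)⁻¹) O :=
    hαc.continuousOn.inv₀ (fun x hx => ne_of_gt hx)
  have hFd : ∀ y, 0 ≤ y → HasDerivAt F (α y)⁻¹ y := by
    intro y hy
    have hyO : y ∈ O := hOsub hy
    have hsub : uIcc (0:ℝ) y ⊆ O := fun x hx => hOsub (by
      rcases hx with ⟨h1, _⟩
      simpa [hy] using h1)
    exact intervalIntegral.integral_hasDerivAt_right
      ((hicont.mono hsub).intervalIntegrable)
      (hicont.stronglyMeasurableAtFilter hOopen y hyO)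
      (hicont.continuousAt (hOopen.mem_nhds hyO))
  have hvt₀ : v t₀ = ‖x₀‖ := by simp [hvdef]
  -- h := F ∘ v - id is antitone on [t₀, T)
  set h : ℝ → ℝ := fun t => F (v t) - t with hhdef
  have hhd : ∀ t ∈ Ico t₀ T, HasDerivAt h ((α (v t))⁻¹ * w t - 1) t := by
    intro t ht
    have hvnn : (0:ℝ) ≤ v t := le_trans (norm_nonneg _) (hv0 t ht)
    exact ((hFd (v t) hvnn).comp t (hvderiv t (hIcoU ht))).sub (hasDerivAt_id t)
  have hdnp : ∀ t ∈ Ico t₀ T, (α (v t))⁻¹ * w t - 1 ≤ 0 := by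
    intro t ht
    have hvnn : (0:ℝ) ≤ v t := le_trans (norm_nonneg _) (hv0 t ht)
    have hαv : 0 < α (v t) := hαpos _ hvnn
    have hw : w t ≤ α (v t) := hαmono _ _ (norm_nonneg _) (hcv t ht)
    have : (α (v t))⁻¹ * w t ≤ (α (v t))⁻¹ * α (v t) :=
      mul_le_mul_of_nonneg_left hw (inv_nonneg.mpr hαv.le)
    rw [inv_mul_cancel₀ (ne_of_gt hαv)] at this
    linarith
  have hanti : AntitoneOn h (Ico t₀ T) := by
    apply antitoneOn_of_deriv_nonpos (convex_Ico t₀ T)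
    · exact fun t ht => (hhd t ht).continuousAt.continuousWithinAt
    · rw [interior_Ico]
      exact fun t ht => ((hhd t (Ioo_subset_Ico_self ht)).differentiableAt).differentiableWithinAt
    · rw [interior_Ico]
      intro t ht
      rw [(hhd t (Ioo_subset_Ico_self ht)).deriv]
      exact hdnp t (Ioo_subset_Ico_self ht)
  set M : ℝ := F ‖x₀‖ + (T - t₀) with hMdef
  have hFvM : ∀ t ∈ Ico t₀ T, F (v t) ≤ M := by
    intro t ht
    have := hanti (left_mem_Ico.mpr ht₀T) ht ht.1
    simp only [hhdef, ht₀val, hvt₀] at this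
    have htT : t < T := ht.2
    simp only [hMdef]
    linarith
  -- a uniform bound B on v and hence on ‖c‖
  obtain ⟨B₀, hB₀⟩ := (Filter.tendsto_atTop.mp hαdiv (M + 1)).exists_forall_of_atTop
  set B : ℝ := max B₀ 0 with hBdef
  have hB0 : (0:ℝ) ≤ B := le_max_right _ _
  have hvB : ∀ t ∈ Ico t₀ T, v t ≤ B := by
    intro t ht
    by_contra hlt
    push_neg at hlt
    have : M + 1 ≤ F (v t) := hB₀ _ (le_trans (le_max_left _ _) hlt.le)
    have := hFvM t ht
    linarith
  have hcB : ∀ t ∈ Ico t₀ T, ‖c t‖ ≤ B := fun t ht => (hcv t ht).trans (hvB t ht)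
  set L : ℝ := α B with hLdef
  have hL0 : (0:ℝ) ≤ L := (hαpos B hB0).le
  have hXL : ∀ t ∈ Ico t₀ T, ‖X (c t)‖ ≤ L :=
    fun t ht => (hbound (c t)).le.trans (hαmono _ _ (norm_nonneg _) (hcB t ht))
  have hlip : ∀ x ∈ Ico t₀ T, ∀ y ∈ Ico t₀ T, ‖c y - c x‖ ≤ L * ‖y - x‖ := by
    intro x hx y hy
    exact Convex.norm_image_sub_le_of_norm_hasDerivWithin_le
      (fun t ht => (hcderiv t (hIcoU ht)).hasDerivWithinAt) hXL (convex_Ico t₀ T) hx hy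
  -- limit of c at T from the left
  set δ : ℝ := T - t₀ with hδdef
  have hδ0 : 0 < δ := by simp only [hδdef]; linarith
  set un : ℕ → ℝ := fun n => T - δ/(n+1) with hundef
  have hun : ∀ n : ℕ, un n ∈ Ico t₀ T := by
    intro n
    have hn1 : (0:ℝ) < (n:ℝ) + 1 := by positivity
    have h1 : δ/((n:ℝ)+1) ≤ δ := div_le_self hδ0.le ((le_add_iff_nonneg_left 1).mpr (Nat.cast_nonneg n))
    have h2 : 0 < δ/((n:ℝ)+1) := div_pos hδ0 hn1
    constructor
    · simp only [hundef, hδdef]; linarith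
    · simp only [hundef]; linarith
  have hdiff : ∀ n m N : ℕ, N ≤ n → N ≤ m → |un n - un m| ≤ δ/(N+1) := by
    intro n m N hn hm
    have key : ∀ k : ℕ, N ≤ k → 0 < δ/((k:ℝ)+1) ∧ δ/((k:ℝ)+1) ≤ δ/((N:ℝ)+1) := by
      intro k hk
      have hk1 : (0:ℝ) < (k:ℝ) + 1 := by positivity
      refine ⟨div_pos hδ0 hk1, ?_⟩
      apply div_le_div_of_nonneg_left hδ0.le (by positivity)
      exact_mod_cast Nat.succ_le_succ hk
    obtain ⟨h1, h2⟩ := key n hn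
    obtain ⟨h3, h4⟩ := key m hm
    rw [abs_le]
    constructor <;> · simp only [hundef]; nlinarith
  have hcauchy : CauchySeq (fun n => c (un n)) := by
    refine cauchySeq_of_le_tendsto_0 (fun N => L * (δ/(N+1))) (fun n m N hn hm => ?_) ?_
    · 
      rw [dist_eq_norm]
      calc ‖c (un n) - c (un m)‖ ≤ L * ‖un n - un m‖ := hlip _ (hun m) _ (hun n)
      _ ≤ L * (δ/(N+1)) := by
          apply mul_le_mul_of_nonneg_left _ hL0
          rw [Real.norm_eq_abs]
          exact hdiff n m N hn hm
    · have h1 : Tendsto (fun N : ℕ => (1:ℝ)/(N+1)) atTop (𝓝 0) :=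
        tendsto_one_div_add_atTop_nhds_zero_nat
      have := h1.const_mul (L * δ)
      rw [mul_zero] at this
      convert this using 2 with N
      field_simp
  obtain ⟨y, hy⟩ := cauchySeq_tendsto_of_complete hcauchy
  have hylim : ∀ t ∈ Ico t₀ T, ‖c t - y‖ ≤ L * (T - t) := by
    intro t ht
    have h1 : Tendsto (fun n => ‖c t - c (un n)‖) atTop (𝓝 ‖c t - y‖) :=
      ((tendsto_const_nhds.sub hy).norm)
    have h2 : Tendsto (fun n : ℕ => L * ((T - t) + δ * (1/(n+1)))) atTop (𝓝 (L * (T - t))) := by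
      have := (tendsto_one_div_add_atTop_nhds_zero_nat.const_mul δ).const_add (T - t)
      rw [mul_zero, add_zero] at this
      exact this.const_mul L
    refine le_of_tendsto_of_tendsto' h1 h2 (fun n => ?_)
    calc ‖c t - c (un n)‖ ≤ L * ‖t - un n‖ := hlip _ (hun n) _ ⟨ht.1, ht.2⟩
    _ ≤ L * ((T - t) + δ * (1/(n+1))) := by
        apply mul_le_mul_of_nonneg_left _ hL0
        have hn1 : (0:ℝ) < (n:ℝ) + 1 := by positivity
        have h5 : 0 < δ/((n:ℝ)+1) := div_pos hδ0 hn1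
        have h6 : t < T := ht.2
        rw [Real.norm_eq_abs, abs_le]
        constructor <;> · simp only [hundef]; rw [mul_one_div]; nlinarith
  -- Picard-Lindelöf data around the limit point y
  obtain ⟨K, s, hs, hlipX⟩ := (hX.contDiffAt (x := y)).exists_lipschitzOnWith
  obtain ⟨R, hR0, hRs⟩ := Metric.mem_nhds_iff.mp hs
  have hynR : (0:ℝ) ≤ ‖y‖ + R := by positivity
  set C : ℝ := α (‖y‖ + R) with hCdef
  have hC0 : 0 < C := hαpos _ hynR
  set ε : ℝ := (R/4)/C with hεdef
  have hε0 : 0 < ε := div_pos (by linarith) hC0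
  -- choose t₁ close to T
  set r : ℝ := min (min ε ((R/4)/(L+1))) δ with hrdef
  have hr0 : 0 < r := lt_min (lt_min hε0 (div_pos (by linarith) (by linarith))) hδ0
  set t₁ : ℝ := T - r/2 with ht₁def
  have hrδ : r ≤ δ := min_le_right _ _
  have hrε : r ≤ ε := (min_le_left _ _).trans (min_le_left _ _)
  have hrR : r ≤ (R/4)/(L+1) := (min_le_left _ _).trans (min_le_right _ _)
  have ht₁mem : t₁ ∈ Ico t₀ T := by
    constructor
    · simp only [ht₁def, hδdef] at *; linarith
    · simp only [ht₁def]; linarith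
  have ht₀t₁ : t₀ < t₁ := by
    simp only [ht₁def, hδdef] at *
    linarith
  have ht₁T : t₁ < T := ht₁mem.2
  have hTt₁ε : T - t₁ < ε := by simp only [ht₁def]; linarith
  have hct₁y : ‖c t₁ - y‖ < R/4 := by
    have h1 := hylim t₁ ht₁mem
    have h2 : T - t₁ = r/2 := by simp only [ht₁def]; ring
    have h3 : L * (r/2) < R/4 := by
      have h4 : L * r ≤ L * ((R/4)/(L+1)) := mul_le_mul_of_nonneg_left hrR hL0
      have h5 : L * ((R/4)/(L+1)) ≤ R/4 := by
        rw [mul_div_assoc']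
        rw [div_le_iff₀ (by linarith : (0:ℝ) < L + 1)]
        nlinarith
      nlinarith
    rw [h2] at h1
    linarith
  have hpl : IsPicardLindelof (fun _ => X) (tmin := t₁ - ε) (tmax := t₁ + ε)
      ⟨t₁, by constructor <;> linarith⟩ (c t₁) (R/4).toNNReal 0 C.toNNReal K := by
    constructor
    · intro t _
      apply hlipX.mono
      intro x hx
      apply hRs
      have h1 : dist x (c t₁) ≤ R/4 := by
        have hx' : dist x (c t₁) ≤ ((R/4).toNNReal : ℝ) := hx
        rwa [Real.coe_toNNReal _ (by linarith)] at hx'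
      have h2 : dist (c t₁) y < R/4 := by rw [dist_eq_norm]; exact hct₁y
      have := dist_triangle x (c t₁) y
      simp only [mem_ball]
      linarith
    · exact fun x _ => continuousOn_const
    · intro t _ x hx
      have hx' : dist x (c t₁) ≤ ((R/4).toNNReal : ℝ) := hx
      rw [Real.coe_toNNReal _ (by linarith)] at hx'
      rw [Real.coe_toNNReal _ hC0.le]
      have h1 : ‖x - c t₁‖ ≤ R/4 := by rwa [← dist_eq_norm]
      have h2 : ‖c t₁‖ ≤ ‖y‖ + R/4 := by
        have := norm_add_le y (c t₁ - y)
        simp only [add_sub_cancel] at this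
        linarith
      have h3 : ‖x‖ ≤ ‖c t₁‖ + ‖x - c t₁‖ := by
        have := norm_add_le (c t₁) (x - c t₁)
        simp only [add_sub_cancel] at this
        linarith
      have h4 : ‖x‖ ≤ ‖y‖ + R := by linarith
      exact (hbound x).le.trans (hαmono _ _ (norm_nonneg _) h4)
    · have hmax : max (t₁ + ε - t₁) (t₁ - (t₁ - ε)) = ε := by
        simp [add_sub_cancel_left, sub_sub_cancel]
      simp only [tsub_zero, NNReal.coe_zero, sub_zero, Real.coe_toNNReal _ hC0.le,
        Real.coe_toNNReal _ (by linarith : (0:ℝ) ≤ R/4)]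
      change C * max (t₁ + ε - t₁) (t₁ - (t₁ - ε)) ≤ R/4
      rw [hmax, hεdef, mul_comm, div_mul_cancel₀ _ (ne_of_gt hC0)]
  obtain ⟨f, hft₁, hfsol⟩ := hpl.exists_eq_forall_mem_Icc_hasDerivWithinAt₀
  have hfIoo : ∀ u ∈ Ioo (t₁-ε) (t₁+ε), HasDerivAt f (X (f u)) u := fun u hu =>
    (hfsol u (Ioo_subset_Icc_self hu)).hasDerivAt (Icc_mem_nhds hu.1 hu.2)
  set m : ℝ := max s₀ (t₁ - ε) with hmdef
  have hmt₁ : m < t₁ := max_lt (by linarith) (by linarith)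
  have hEq : EqOn c f (Ioo m T) := by
    apply my_uniq hX (t₀ := t₁) ⟨hmt₁, ht₁T⟩
    · exact fun t ht => hcderiv t ⟨(le_max_left s₀ (t₁ - ε)).trans_lt ht.1, ht.2⟩
    · intro t ht
      exact hfIoo t ⟨(le_max_right s₀ (t₁ - ε)).trans_lt ht.1, by linarith [ht.2]⟩
    · exact hft₁.symm
  set g : ℝ → E := fun t => if t < t₁ then c t else f t with hgdef
  have hgc : ∀ t, t < t₁ → g t = c t := fun t ht => if_pos ht
  have hgf : ∀ t ∈ Ioo m (t₁ + ε), g t = f t := by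
    intro t ht
    by_cases h' : t < t₁
    · simp only [hgdef, if_pos h']
      exact hEq ⟨ht.1, h'.trans ht₁T⟩
    · simp only [hgdef, if_neg h']
  have hgsol : ∀ u ∈ Ioo s₀ (t₁ + ε), HasDerivAt g (X (g u)) u := by
    intro u hu
    rcases lt_or_ge u t₁ with h' | h'
    · have huU : u ∈ U := ⟨hu.1, h'.trans ht₁T⟩
      rw [hgc u h']
      refine (hcderiv u huU).congr_of_eventuallyEq ?_
      filter_upwards [Iio_mem_nhds h'] with t ht
      exact hgc t ht
    · have hmu : m < u := lt_of_lt_of_le hmt₁ h'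
      have huIoo : u ∈ Ioo (t₁ - ε) (t₁ + ε) := ⟨by linarith, hu.2⟩
      rw [hgf u ⟨hmu, hu.2⟩]
      refine (hfIoo u huIoo).congr_of_eventuallyEq ?_
      filter_upwards [Ioo_mem_nhds hmu hu.2] with t ht
      exact hgf t ht
  have hgt₀ : g t₀ = x₀ := by rw [hgc t₀ ht₀t₁]; exact ht₀val
  have hu₂ : (T + (t₁ + ε))/2 ∈ mySolSet X t₀ x₀ := by
    apply mySolSet_witness_subset hs₀ (show t₀ < t₁ + ε by linarith) hgt₀ hgsol
    constructor
    · linarith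
    · linarith
  have hle := le_csSup hbdd hu₂
  linarith

lemma my_neg_mem {X : E → E} {t₀ : ℝ} {x₀ : E} {t : ℝ} (ht : t ∈ mySolSet X t₀ x₀) :
    -t ∈ mySolSet (fun p => -X p) (-t₀) x₀ := by
  obtain ⟨f, s, e, hs, he, hst, hte, hft₀, hf⟩ := ht
  refine ⟨fun u => f (-u), -e, -s, by linarith, by linarith, by linarith, by linarith,
    by simpa using hft₀, ?_⟩
  intro u hu
  have h1 : HasDerivAt f (X (f (-u))) (-u) := hf (-u) ⟨by linarith [hu.2], by linarith [hu.1]⟩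
  have h2 := h1.scomp u (hasDerivAt_neg u)
  simpa [Function.comp_def] using h2

lemma my_global [CompleteSpace E] {X : E → E} (hX : ContDiff ℝ 1 X)
    {α : ℝ → ℝ} (hαc : Continuous α)
    (hαpos : ∀ x, 0 ≤ x → 0 < α x)
    (hαmono : ∀ x y, 0 ≤ x → x ≤ y → α x ≤ α y)
    (hαdiv : Tendsto (fun y => ∫ x in (0:ℝ)..y, (α x)⁻¹) atTop atTop)
    (hbound : ∀ p : E, ‖X p‖ < α ‖p‖) (t₀ : ℝ) (x₀ : E) :
    ∃ f : ℝ → E, f t₀ = x₀ ∧ ∀ t, HasDerivAt f (X (f t)) t := by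
  have hA := my_not_bddAbove hX hαc hαpos hαmono hαdiv hbound t₀ x₀
  have hXneg : ContDiff ℝ 1 (fun p => -X p) := hX.neg
  have hbneg : ∀ p : E, ‖-X p‖ < α ‖p‖ := by simpa using hbound
  have hB := my_not_bddAbove hXneg hαc hαpos hαmono hαdiv hbneg (-t₀) x₀
  refine ⟨mySol X t₀ x₀, (mySol_self hX).2, fun t => ?_⟩
  apply mySol_hasDerivAt hX
  obtain ⟨u, huS, hu⟩ := not_bddAbove_iff.mp hA (max t t₀)
  obtain ⟨l', hlS, hl⟩ := not_bddAbove_iff.mp hB (max (-t) (-t₀))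
  have hlS' : -l' ∈ mySolSet X t₀ x₀ := by
    have := my_neg_mem hlS
    simpa [neg_neg] using this
  rcases le_or_gt t₀ t with h | h
  · obtain ⟨f, s, e, hs, he, hsu, hue, hft₀, hf⟩ := huS
    exact mySolSet_witness_subset hs he hft₀ hf
      ⟨lt_of_lt_of_le hs h, lt_of_le_of_lt (le_trans (le_max_left t t₀) hu.le) hue⟩
  · obtain ⟨f, s, e, hs, he, hsl, hle, hft₀, hf⟩ := hlS'
    have hlt : -l' < t := by
      have : -t < l' := lt_of_le_of_lt (le_max_left (-t) (-t₀)) hl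
      linarith
    exact mySolSet_witness_subset hs he hft₀ hf ⟨hsl.trans hlt, h.trans he⟩


end MyAux


/-- A `C¹` vector field on a Banach space that is primarily bounded (i.e. `‖X p‖ < α ‖p‖` for a
positive, non-decreasing, locally Lipschitz `α` with `∫₀^∞ dx/α(x) = ∞`) is complete. -/
theorem stmt_5 {E : Type*} [NormedAddCommGroup E] [NormedSpace ℝ E] [CompleteSpace E]
    (X : E → E) (hX : ContDiff ℝ 1 X)
    (α : ℝ → ℝ) (hαc : Continuous α) (hαl : LocallyLipschitz α)
    (hαpos : ∀ x, 0 ≤ x → 0 < α x)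
    (hαmono : ∀ x y, 0 ≤ x → x ≤ y → α x ≤ α y)
    (hαdiv : Filter.Tendsto (fun y => ∫ x in (0:ℝ)..y, (α x)⁻¹) Filter.atTop Filter.atTop)
    (hbound : ∀ p : E, ‖X p‖ < α ‖p‖)
    (a b : ℝ) (c : ℝ → E)
    (hc : ∀ t ∈ Set.Ioo a b, HasDerivAt c (X (c t)) t) :
    ∃ c' : ℝ → E, (∀ t ∈ Set.Ioo a b, c' t = c t) ∧ ∀ t : ℝ, HasDerivAt c' (X (c' t)) t := by
  rcases le_or_gt b a with hba | hab
  · obtain ⟨f, _, hf⟩ := my_global hX hαc hαpos hαmono hαdiv hbound 0 0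
    refine ⟨f, fun t ht => absurd ht ?_, hf⟩
    rw [Set.Ioo_eq_empty (by linarith)]
    exact Set.notMem_empty t
  · have ht₀ : (a+b)/2 ∈ Set.Ioo a b := ⟨by linarith, by linarith⟩
    obtain ⟨f, hft₀, hf⟩ := my_global hX hαc hαpos hαmono hαdiv hbound ((a+b)/2) (c ((a+b)/2))
    exact ⟨f, fun t ht => my_uniq hX ht₀ (fun u _ => hf u) hc hft₀ ht, hf⟩
end

section
/- Let E be a Banach space and X : E × ℝ → E a time-dependent C¹ vector field. Suppose there exist continuous functions C₀, C₁ : ℝ → (0,∞) such that ‖X(p,t)‖ ≤ C₀(t) + C₁(t)‖p‖ for all (p,t). Then every maximal solution of c'(t) = X(c(t), t) is defined on all of ℝ. -/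
open Set Filter Topology

section Helpers
variable {E : Type*} [NormedAddCommGroup E] [NormedSpace ℝ E]

/-- Forward-in-time uniqueness for an autonomous `C¹` field. -/
lemma my_uniq_right {F : Type*} [NormedAddCommGroup F] [NormedSpace ℝ F] (G : F → F) (hG : ContDiff ℝ 1 G) {A B τ T : ℝ}
    (hτ : τ ∈ Set.Ioo A B) (hT : T ∈ Set.Ioo A B) (hτT : τ ≤ T)
    {α β : ℝ → F}
    (hα : ∀ t ∈ Set.Ioo A B, HasDerivAt α (G (α t)) t)
    (hβ : ∀ t ∈ Set.Ioo A B, HasDerivAt β (G (β t)) t)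
    (heq : α τ = β τ) : α T = β T := by
  set W : Set ℝ := {t | t ∈ Set.Icc τ T ∧ ∀ r ∈ Set.Icc τ t, α r = β r} with hW
  have hτW : τ ∈ W := ⟨⟨le_rfl, hτT⟩, fun r hr => by rw [le_antisymm hr.2 hr.1]; exact heq⟩
  have hne : W.Nonempty := ⟨τ, hτW⟩
  have hbdd : BddAbove W := ⟨T, fun t ht => ht.1.2⟩
  set u := sSup W with hu
  have huτ : τ ≤ u := le_csSup hbdd hτW
  have huT : u ≤ T := csSup_le hne (fun t ht => ht.1.2)
  have huI : u ∈ Set.Ioo A B := ⟨lt_of_lt_of_le hτ.1 huτ, lt_of_le_of_lt huT hT.2⟩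
  have hIco : ∀ r ∈ Set.Ico τ u, α r = β r := by
    intro r hr
    obtain ⟨w, hwW, hrw⟩ := exists_lt_of_lt_csSup hne hr.2
    exact hwW.2 r ⟨hr.1, hrw.le⟩
  have hαβu : α u = β u := by
    rcases eq_or_lt_of_le huτ with h | h
    · rw [← h]; exact heq
    · have hneb : (𝓝[Set.Ico τ u] u).NeBot := by
        refine mem_closure_iff_nhdsWithin_neBot.mp ?_
        rw [closure_Ico (ne_of_lt h)]
        exact ⟨huτ, le_rfl⟩
      have h1 : Tendsto α (𝓝[Set.Ico τ u] u) (𝓝 (α u)) :=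
        ((hα u huI).continuousAt.continuousWithinAt).tendsto
      have h2 : Tendsto β (𝓝[Set.Ico τ u] u) (𝓝 (β u)) :=
        ((hβ u huI).continuousAt.continuousWithinAt).tendsto
      have h3 : Tendsto α (𝓝[Set.Ico τ u] u) (𝓝 (β u)) :=
        h2.congr' (eventually_nhdsWithin_of_forall (fun r hr => (hIco r hr).symm))
      exact tendsto_nhds_unique h1 h3
  have huW : u ∈ W := ⟨⟨huτ, huT⟩, fun r hr => by
    rcases lt_or_eq_of_le hr.2 with h | h
    · exact hIco r ⟨hr.1, h⟩
    · rw [h]; exact hαβu⟩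
  rcases eq_or_lt_of_le huT with h | h
  · exact huW.2 T ⟨huτ.trans h.le, h ▸ le_rfl⟩
  exfalso
  obtain ⟨K, U, hU, hlip⟩ := (hG.contDiffAt : ContDiffAt ℝ 1 G (α u)).exists_lipschitzOnWith
  have hαU : ∀ᶠ t in 𝓝 u, α t ∈ U := (hα u huI).continuousAt.eventually_mem hU
  have hβU : ∀ᶠ t in 𝓝 u, β t ∈ U :=
    (hβ u huI).continuousAt.eventually_mem (hαβu ▸ hU)
  have hIoo : ∀ᶠ t in 𝓝 u, t ∈ Set.Ioo A B :=
    eventually_of_mem (isOpen_Ioo.mem_nhds huI) (fun x hx => hx)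
  have hEq : α =ᶠ[𝓝 u] β := by
    refine ODE_solution_unique_of_eventually (v := fun _ => G) (s := fun _ => U)
      (Filter.Eventually.of_forall fun _ => hlip) ?_ ?_ hαβu
    · filter_upwards [hαU, hIoo] with t h1 h2 using ⟨hα t h2, h1⟩
    · filter_upwards [hβU, hIoo] with t h1 h2 using ⟨hβ t h2, h1⟩
  obtain ⟨δ, hδ, hball⟩ := Metric.eventually_nhds_iff.mp hEq
  set u' := min (u + δ / 2) T with hu'
  have huu' : u < u' := lt_min (by linarith) h
  have hu'W : u' ∈ W := by
    refine ⟨⟨huτ.trans huu'.le, min_le_right _ _⟩, fun r hr => ?_⟩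
    rcases le_or_gt r u with h' | h'
    · exact huW.2 r ⟨hr.1, h'⟩
    · refine hball ?_
      rw [Real.dist_eq, abs_of_pos (by linarith)]
      have : r ≤ u + δ / 2 := hr.2.trans (min_le_left _ _)
      linarith
  exact absurd (le_csSup hbdd hu'W) (not_le.mpr huu')

lemma my_uniq_auto {F : Type*} [NormedAddCommGroup F] [NormedSpace ℝ F] (G : F → F) (hG : ContDiff ℝ 1 G) {A B τ : ℝ}
    (hτ : τ ∈ Set.Ioo A B) {α β : ℝ → F}
    (hα : ∀ t ∈ Set.Ioo A B, HasDerivAt α (G (α t)) t)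
    (hβ : ∀ t ∈ Set.Ioo A B, HasDerivAt β (G (β t)) t)
    (heq : α τ = β τ) : Set.EqOn α β (Set.Ioo A B) := by
  intro T hT
  rcases le_total τ T with h | h
  · exact my_uniq_right G hG hτ hT h hα hβ heq
  · have hGn : ContDiff ℝ 1 (fun z : F => -G z) := hG.neg
    have hd : ∀ (γ : ℝ → F), (∀ t ∈ Set.Ioo A B, HasDerivAt γ (G (γ t)) t) →
        ∀ t ∈ Set.Ioo (-B) (-A), HasDerivAt (fun s => γ (-s)) (-G (γ (-t))) t := by
      intro γ hγ t ht
      have h1 : HasDerivAt (fun s : ℝ => -s) (-1) t := (hasDerivAt_neg t)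
      have h2 : HasDerivAt γ (G (γ (-t))) (-t) := hγ (-t) ⟨by linarith [ht.2], by linarith [ht.1]⟩
      have := HasDerivAt.scomp t h2 h1
      simpa [neg_one_smul, Function.comp_def] using this
    have key := my_uniq_right (fun z => -G z) hGn (A := -B) (B := -A) (τ := -τ) (T := -T)
      ⟨neg_lt_neg hτ.2, neg_lt_neg hτ.1⟩ ⟨neg_lt_neg hT.2, neg_lt_neg hT.1⟩ (neg_le_neg h)
      (α := fun s => α (-s)) (β := fun s => β (-s))
      (fun t ht => by simpa using hd α hα t ht) (fun t ht => by simpa using hd β hβ t ht)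
      (by simpa using heq)
    simpa using key

lemma my_uniq_s6 (v : E → ℝ → E) (hv : ContDiff ℝ 1 (fun q : E × ℝ => v q.1 q.2))
    {A B τ : ℝ} (hτ : τ ∈ Set.Ioo A B) {γ₁ γ₂ : ℝ → E}
    (h₁ : ∀ t ∈ Set.Ioo A B, HasDerivAt γ₁ (v (γ₁ t) t) t)
    (h₂ : ∀ t ∈ Set.Ioo A B, HasDerivAt γ₂ (v (γ₂ t) t) t)
    (heq : γ₁ τ = γ₂ τ) : Set.EqOn γ₁ γ₂ (Set.Ioo A B) := by
  set G : E × ℝ → E × ℝ := fun q => (v q.1 q.2, 1) with hGdef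
  have hG : ContDiff ℝ 1 G := hv.prodMk contDiff_const
  have hpair : ∀ (γ : ℝ → E), (∀ t ∈ Set.Ioo A B, HasDerivAt γ (v (γ t) t) t) →
      ∀ t ∈ Set.Ioo A B, HasDerivAt (fun s => (γ s, s)) (G (γ t, t)) t := by
    intro γ hγ t ht
    exact (hγ t ht).prodMk (hasDerivAt_id t)
  have := my_uniq_auto G hG hτ (hpair γ₁ h₁) (hpair γ₂ h₂) (by simp [heq])
  intro t ht
  simpa using congrArg Prod.fst (this ht)

lemma my_gronwallBound_mono {δ K ε x y : ℝ} (hδ : 0 ≤ δ) (hK : 0 < K) (hε : 0 ≤ ε)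
    (hxy : x ≤ y) : gronwallBound δ K ε x ≤ gronwallBound δ K ε y := by
  simp only [gronwallBound_of_K_ne_0 hK.ne']
  have h := Real.exp_le_exp.mpr (mul_le_mul_of_nonneg_left hxy hK.le)
  have h2 : (0:ℝ) ≤ ε / K := div_nonneg hε hK.le
  nlinarith [Real.exp_pos (K*x), Real.exp_pos (K*y)]

lemma my_norm_bound (v : E → ℝ → E) {D₀ D₁ : ℝ} (hD₀ : 0 ≤ D₀) (hD₁ : 0 < D₁)
    {γ : ℝ → E} {T₀ T : ℝ}
    (hγ : ∀ t ∈ Set.Ico T₀ T, HasDerivAt γ (v (γ t) t) t)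
    (hb : ∀ t ∈ Set.Ico T₀ T, ‖v (γ t) t‖ ≤ D₀ + D₁ * ‖γ t‖) :
    ∀ t ∈ Set.Ico T₀ T, ‖γ t‖ ≤ gronwallBound ‖γ T₀‖ D₁ D₀ (T - T₀) := by
  intro t ht
  have h1 : ∀ s ∈ Set.Icc T₀ t, ‖γ s‖ ≤ gronwallBound ‖γ T₀‖ D₁ D₀ (s - T₀) := by
    apply norm_le_gronwallBound_of_norm_deriv_right_le (f' := fun s => v (γ s) s)
    · intro s hs
      exact (hγ s ⟨hs.1, lt_of_le_of_lt hs.2 ht.2⟩).continuousAt.continuousWithinAt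
    · intro s hs
      exact (hγ s ⟨hs.1, lt_of_lt_of_le hs.2 ht.2.le⟩).hasDerivWithinAt
    · exact le_rfl
    · intro s hs
      have := hb s ⟨hs.1, lt_of_lt_of_le hs.2 ht.2.le⟩
      linarith
  exact (h1 t ⟨ht.1, le_rfl⟩).trans
    (my_gronwallBound_mono (norm_nonneg _) hD₁ hD₀ (by linarith [ht.2]))

lemma my_limit_right [CompleteSpace E] (v : E → ℝ → E)
    (C₀ C₁ : ℝ → ℝ) (hC₀c : Continuous C₀) (hC₁c : Continuous C₁)
    (hC₀ : ∀ t, 0 < C₀ t) (hC₁ : ∀ t, 0 < C₁ t)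
    (hgrowth : ∀ (p : E) (t : ℝ), ‖v p t‖ ≤ C₀ t + C₁ t * ‖p‖)
    {γ : ℝ → E} {T₀ T : ℝ} (hT : T₀ < T)
    (hγ : ∀ t ∈ Set.Ico T₀ T, HasDerivAt γ (v (γ t) t) t) :
    ∃ y, Tendsto γ (𝓝[Set.Ico T₀ T] T) (𝓝 y) := by
  obtain ⟨s₀, -, hs₀'⟩ := isCompact_Icc.exists_isMaxOn (nonempty_Icc.mpr hT.le)
    hC₀c.continuousOn
  obtain ⟨s₁, -, hs₁'⟩ := isCompact_Icc.exists_isMaxOn (nonempty_Icc.mpr hT.le)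
    hC₁c.continuousOn
  have hs₀ : ∀ t ∈ Set.Icc T₀ T, C₀ t ≤ C₀ s₀ := fun t ht => hs₀' ht
  have hs₁ : ∀ t ∈ Set.Icc T₀ T, C₁ t ≤ C₁ s₁ := fun t ht => hs₁' ht
  set D₀ := C₀ s₀ with hD₀def
  set D₁ := C₁ s₁ with hD₁def
  have hD₀ : 0 < D₀ := hC₀ s₀
  have hD₁ : 0 < D₁ := hC₁ s₁
  set M := gronwallBound ‖γ T₀‖ D₁ D₀ (T - T₀) with hMdef
  have hbM : ∀ t ∈ Set.Ico T₀ T, ‖γ t‖ ≤ M := by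
    apply my_norm_bound v hD₀.le hD₁ hγ
    intro t ht
    have h1 := hgrowth (γ t) t
    have h2 := hs₀ t (Ico_subset_Icc_self ht)
    have h3 := hs₁ t (Ico_subset_Icc_self ht)
    nlinarith [norm_nonneg (γ t)]
  have hM0 : 0 ≤ M := le_trans (norm_nonneg _) (hbM T₀ ⟨le_rfl, hT⟩)
  set L := D₀ + D₁ * M with hLdef
  have hL0 : 0 ≤ L := by positivity
  have hlip : ∀ x ∈ Set.Ico T₀ T, ∀ y ∈ Set.Ico T₀ T, ‖γ y - γ x‖ ≤ L * ‖y - x‖ := by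
    intro x hx y hy
    refine Convex.norm_image_sub_le_of_norm_hasDerivWithin_le
      (f' := fun s => v (γ s) s) (fun s hs => (hγ s hs).hasDerivWithinAt) ?_
      (convex_Ico _ _) hx hy
    intro s hs
    have h1 := hgrowth (γ s) s
    have h2 := hbM s hs
    nlinarith [(hC₁ s).le, hs₁ s (Ico_subset_Icc_self hs), hs₀ s (Ico_subset_Icc_self hs),
      norm_nonneg (γ s), hC₁ s]
  have hneb : (𝓝[Set.Ico T₀ T] T).NeBot := by
    refine mem_closure_iff_nhdsWithin_neBot.mp ?_
    rw [closure_Ico hT.ne]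
    exact right_mem_Icc.mpr hT.le
  have hcauchy : Cauchy (Filter.map γ (𝓝[Set.Ico T₀ T] T)) := by
    rw [Metric.cauchy_iff]
    refine ⟨Filter.map_neBot, fun ε hε => ?_⟩
    have hL1 : 0 < L + 1 := by linarith
    set u := max T₀ (T - ε / (L + 1)) with hudef
    have huT : u < T := max_lt hT (by have := div_pos hε hL1; linarith)
    refine ⟨γ '' Set.Ioo u T, ?_, ?_⟩
    · apply Filter.image_mem_map
      refine mem_nhdsWithin.mpr ⟨Set.Ioi u, isOpen_Ioi, huT, ?_⟩
      rintro x ⟨hx1, hx2⟩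
      exact ⟨hx1, hx2.2⟩
    · rintro _ ⟨x, hx, rfl⟩ _ ⟨z, hz, rfl⟩
      have hxI : x ∈ Set.Ico T₀ T := ⟨(le_max_left _ _).trans hx.1.le, hx.2⟩
      have hzI : z ∈ Set.Ico T₀ T := ⟨(le_max_left _ _).trans hz.1.le, hz.2⟩
      have h1 := hlip z hzI x hxI
      rw [dist_eq_norm]
      have h2 : ‖x - z‖ ≤ T - u := by
        rw [Real.norm_eq_abs, abs_le]
        constructor <;> nlinarith [hx.1, hx.2, hz.1, hz.2]
      have h3 : T - u ≤ ε / (L + 1) := by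
        have := le_max_right T₀ (T - ε / (L + 1))
        linarith [this.trans_eq hudef.symm, le_max_right T₀ (T - ε / (L+1))]
      have h4 : (L + 1) * (ε / (L + 1)) = ε := mul_div_cancel₀ ε hL1.ne'
      calc ‖γ x - γ z‖ ≤ L * ‖x - z‖ := h1
        _ ≤ L * (ε / (L + 1)) := by nlinarith
        _ < ε := by nlinarith [div_pos hε hL1]
  obtain ⟨y, hy⟩ := CompleteSpace.complete hcauchy
  exact ⟨y, hy⟩

lemma my_deriv_endpoint (v : E → ℝ → E) (hvc : Continuous (fun q : E × ℝ => v q.1 q.2))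
    {γ : ℝ → E} {T₀ T : ℝ} (hT : T₀ < T) {y : E}
    (hγ : ∀ t ∈ Set.Ico T₀ T, HasDerivAt γ (v (γ t) t) t)
    (hy : Tendsto γ (𝓝[Set.Ico T₀ T] T) (𝓝 y)) :
    HasDerivWithinAt (fun t => if t < T then γ t else y) (v y T) (Set.Iic T) T := by
  set γb := fun t => if t < T then γ t else y with hγb
  rw [hasDerivWithinAt_iff_tendsto_slope]
  have hIio : Set.Iic T \ {T} = Set.Iio T := by
    ext x; simp [lt_iff_le_and_ne]
  rw [hIio]
  -- the vector field along the curve tends to v y T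
  have hvv : Tendsto (fun s => v (γ s) s) (𝓝[Set.Ico T₀ T] T) (𝓝 (v y T)) := by
    have h1 : Tendsto (fun s => (γ s, s)) (𝓝[Set.Ico T₀ T] T) (𝓝 (y, T)) :=
      hy.prodMk_nhds (tendsto_id.mono_left nhdsWithin_le_nhds)
    exact (hvc.tendsto (y, T)).comp h1
  rw [Metric.tendsto_nhdsWithin_nhds]
  intro ε hε
  have hη : (0:ℝ) < ε / 2 := by linarith
  have hev : ∀ᶠ s in 𝓝[Set.Ico T₀ T] T, ‖v (γ s) s - v y T‖ < ε / 2 := by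
    have := hvv.eventually (eventually_of_mem (Metric.ball_mem_nhds (v y T) hη)
      (fun z hz => hz))
    filter_upwards [this] with s hs
    rwa [Metric.mem_ball, dist_eq_norm] at hs
  obtain ⟨δ₁, hδ₁, hball⟩ := Metric.mem_nhdsWithin_iff.mp hev
  set t₁ := max T₀ (T - δ₁) with ht₁def
  have ht₁T : t₁ < T := max_lt hT (by linarith)
  have hsmall : ∀ s, t₁ < s → s < T → ‖v (γ s) s - v y T‖ ≤ ε / 2 := by
    intro s hs1 hs2
    refine le_of_lt (hball ⟨?_, ⟨(le_max_left _ _).trans hs1.le, hs2⟩⟩)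
    rw [Metric.mem_ball, Real.dist_eq, abs_of_neg (by linarith)]
    have := le_max_right T₀ (T - δ₁)
    have h5 : T - δ₁ ≤ t₁ := le_max_right _ _
    linarith
  -- key estimate
  have hkey : ∀ x, t₁ < x → x < T → ‖y - γ x - (T - x) • v y T‖ ≤ (ε / 2) * (T - x) := by
    intro x hx1 hx2
    have hstep : ∀ w, x < w → w < T →
        ‖(γ w - w • v y T) - (γ x - x • v y T)‖ ≤ (ε / 2) * ‖w - x‖ := by
      intro w hw1 hw2
      refine Convex.norm_image_sub_le_of_norm_hasDerivWithin_le
        (f := fun s => γ s - s • v y T) (f' := fun s => v (γ s) s - v y T)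
        (s := Set.Icc x w) ?_ ?_ (convex_Icc _ _) (left_mem_Icc.mpr (by linarith))
        (right_mem_Icc.mpr (by linarith))
      · intro s hs
        have hsI : s ∈ Set.Ico T₀ T :=
          ⟨(le_max_left _ _).trans (hx1.le.trans hs.1), lt_of_le_of_lt hs.2 hw2⟩
        have := ((hγ s hsI).sub ((hasDerivAt_id s).smul_const (v y T))).hasDerivWithinAt
          (s := Set.Icc x w)
        convert this using 1 <;> simp [funext_iff]
      · intro s hs
        exact hsmall s (lt_of_lt_of_le hx1 hs.1) (lt_of_le_of_lt hs.2 hw2)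
    -- let w → T
    have hneb : (𝓝[Set.Ioo x T] T).NeBot := by
      refine mem_closure_iff_nhdsWithin_neBot.mp ?_
      rw [closure_Ioo (ne_of_lt hx2)]
      exact right_mem_Icc.mpr hx2.le
    have hmono : 𝓝[Set.Ioo x T] T ≤ 𝓝[Set.Ico T₀ T] T :=
      nhdsWithin_mono _ (fun s hs => ⟨(le_max_left _ _).trans (hx1.le.trans hs.1.le), hs.2⟩)
    have htend1 : Tendsto (fun w => ‖(γ w - w • v y T) - (γ x - x • v y T)‖)
        (𝓝[Set.Ioo x T] T) (𝓝 ‖(y - T • v y T) - (γ x - x • v y T)‖) := by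
      have h1 : Tendsto (fun w => γ w - w • v y T) (𝓝[Set.Ioo x T] T)
          (𝓝 (y - T • v y T)) :=
        Tendsto.sub (hy.mono_left hmono)
          (((continuous_id.smul continuous_const).tendsto T).mono_left nhdsWithin_le_nhds)
      exact (continuous_norm.tendsto _).comp (h1.sub_const _)
    have htend2 : Tendsto (fun w : ℝ => (ε / 2) * ‖w - x‖) (𝓝[Set.Ioo x T] T)
        (𝓝 ((ε / 2) * ‖T - x‖)) := by
      exact Tendsto.const_mul _ (((continuous_norm.comp
        (continuous_id.sub continuous_const)).tendsto T).mono_left nhdsWithin_le_nhds)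
    have hle := le_of_tendsto_of_tendsto htend1 htend2
      (eventually_nhdsWithin_of_forall (fun w hw => hstep w hw.1 hw.2))
    have : ‖(y - T • v y T) - (γ x - x • v y T)‖ = ‖y - γ x - (T - x) • v y T‖ := by
      congr 1
      rw [sub_smul]
      abel
    rw [this, Real.norm_eq_abs, abs_of_pos (by linarith : (0:ℝ) < T - x)] at hle
    exact hle
  -- conclude slope bound
  refine ⟨T - t₁, by linarith, ?_⟩
  intro x hx hdist
  have hx2 : x < T := hx
  have hx1 : t₁ < x := by
    rw [Real.dist_eq, abs_of_neg (by linarith)] at hdist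
    linarith
  have hxT : x - T ≠ 0 := sub_ne_zero.mpr (ne_of_lt hx2)
  rw [dist_eq_norm]
  have hslope : slope γb T x = (x - T)⁻¹ • (γ x - y) := by
    rw [slope_def_module, hγb]
    beta_reduce
    rw [if_pos hx2, if_neg (lt_irrefl T)]
  have heq2 : (x - T)⁻¹ • ((γ x - y) - (x - T) • v y T) = (x - T)⁻¹ • (γ x - y) - v y T := by
    rw [smul_sub, smul_smul, inv_mul_cancel₀ hxT, one_smul]
  rw [hslope, ← heq2, norm_smul]
  have hnorm : ‖(γ x - y) - (x - T) • v y T‖ = ‖y - γ x - (T - x) • v y T‖ := by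
    rw [← norm_neg]
    congr 1
    module
  have h7 : ‖(x - T)⁻¹‖ = (T - x)⁻¹ := by
    rw [Real.norm_eq_abs, abs_inv, abs_of_neg (by linarith : x - T < 0)]
    congr 1
    ring
  rw [hnorm, h7]
  have h6 := hkey x hx1 hx2
  have h8 : (0:ℝ) < T - x := by linarith
  calc (T - x)⁻¹ * ‖y - γ x - (T - x) • v y T‖ ≤ (T - x)⁻¹ * (ε / 2 * (T - x)) :=
        mul_le_mul_of_nonneg_left h6 (by positivity)
    _ = ε / 2 := by field_simp
    _ < ε := by linarith

lemma my_loc_ex [CompleteSpace E] (v : E → ℝ → E)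
    (hv : ContDiff ℝ 1 (fun q : E × ℝ => v q.1 q.2)) (x₀ : E) (t₀ : ℝ) :
    ∃ ε > (0:ℝ), ∃ γ : ℝ → E, γ t₀ = x₀ ∧
      ∀ t ∈ Set.Ioo (t₀ - ε) (t₀ + ε), HasDerivAt γ (v (γ t) t) t := by
  set G : E × ℝ → E × ℝ := fun q => (v q.1 q.2, 1) with hG
  have hGc : ContDiff ℝ 1 G := hv.prodMk contDiff_const
  obtain ⟨α, hα0, ε, hε, hαd⟩ :=
    ContDiffAt.exists_forall_mem_closedBall_exists_eq_forall_mem_Ioo_hasDerivAt₀ (hGc.contDiffAt (x := (x₀, t₀))) t₀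
  have hτ : t₀ ∈ Set.Ioo (t₀ - ε) (t₀ + ε) := ⟨by linarith, by linarith⟩
  have hsnd : ∀ t ∈ Set.Ioo (t₀ - ε) (t₀ + ε), (α t).2 = t := by
    have h1 : ∀ s ∈ Set.Ioo (t₀ - ε) (t₀ + ε),
        HasDerivAt (fun r => (α r).2) ((fun _ : ℝ => (1:ℝ)) ((α s).2)) s := by
      intro s hs
      have h := (ContinuousLinearMap.snd ℝ E ℝ).hasFDerivAt.comp_hasDerivAt s (hαd s hs)
      simpa [hG, Function.comp_def] using h
    have h2 : ∀ s ∈ Set.Ioo (t₀ - ε) (t₀ + ε),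
        HasDerivAt (fun r : ℝ => r) ((fun _ : ℝ => (1:ℝ)) s) s := fun s _ => hasDerivAt_id s
    exact my_uniq_auto (fun _ : ℝ => (1:ℝ)) contDiff_const hτ h1 h2 (by simp [hα0])
  refine ⟨ε, hε, fun t => (α t).1, by simp [hα0], ?_⟩
  intro t ht
  have h := (ContinuousLinearMap.fst ℝ E ℝ).hasFDerivAt.comp_hasDerivAt t (hαd t ht)
  have h2 : (α t).2 = t := hsnd t ht
  simpa [hG, h2, Function.comp_def] using h

lemma my_extend_right [CompleteSpace E] (v : E → ℝ → E)
    (hv : ContDiff ℝ 1 (fun q : E × ℝ => v q.1 q.2))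
    (C₀ C₁ : ℝ → ℝ) (hC₀c : Continuous C₀) (hC₁c : Continuous C₁)
    (hC₀ : ∀ t, 0 < C₀ t) (hC₁ : ∀ t, 0 < C₁ t)
    (hgrowth : ∀ (p : E) (t : ℝ), ‖v p t‖ ≤ C₀ t + C₁ t * ‖p‖)
    {A B : ℝ} (hAB : A < B) {γ : ℝ → E}
    (hγ : ∀ t ∈ Set.Ioo A B, HasDerivAt γ (v (γ t) t) t) :
    ∃ ε > (0:ℝ), ∃ γ' : ℝ → E, Set.EqOn γ' γ (Set.Ioo A B) ∧
      ∀ t ∈ Set.Ioo A (B + ε), HasDerivAt γ' (v (γ' t) t) t := by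
  set T₀ := (A + B) / 2 with hT₀def
  have hAT₀ : A < T₀ := by rw [hT₀def]; linarith
  have hT₀B : T₀ < B := by rw [hT₀def]; linarith
  have hIco : ∀ t ∈ Set.Ico T₀ B, HasDerivAt γ (v (γ t) t) t :=
    fun t ht => hγ t ⟨lt_of_lt_of_le hAT₀ ht.1, ht.2⟩
  obtain ⟨y, hy⟩ := my_limit_right v C₀ C₁ hC₀c hC₁c hC₀ hC₁ hgrowth hT₀B hIco
  obtain ⟨ε₁, hε₁, h, hh0, hhd⟩ := my_loc_ex v hv y B
  obtain ⟨K, U, hU, hlip⟩ :=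
    (hv.contDiffAt (x := ((y, B) : E × ℝ))).exists_lipschitzOnWith
  obtain ⟨ρ, hρ, hballU⟩ := Metric.mem_nhds_iff.mp hU
  -- time-dependent Lipschitz sets
  set s : ℝ → Set E := fun t => {p | dist p y < ρ ∧ dist t B < ρ} with hsdef
  have hvlip : ∀ t, LipschitzOnWith K (fun p => v p t) (s t) := by
    intro t
    apply LipschitzOnWith.of_dist_le_mul
    intro p hp q hq
    have hpU : (p, t) ∈ U := hballU (by
      rw [Metric.mem_ball, Prod.dist_eq]
      exact max_lt hp.1 hp.2)
    have hqU : (q, t) ∈ U := hballU (by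
      rw [Metric.mem_ball, Prod.dist_eq]
      exact max_lt hq.1 hq.2)
    have := hlip.dist_le_mul (p, t) hpU (q, t) hqU
    simpa [Prod.dist_eq, dist_self, max_eq_left dist_nonneg] using this
  -- choose t₁
  have hyb : ∀ᶠ u in 𝓝[Set.Ico T₀ B] B, γ u ∈ Metric.ball y ρ :=
    hy.eventually (eventually_of_mem (Metric.ball_mem_nhds y hρ) (fun z hz => hz))
  obtain ⟨δ₂, hδ₂, hball₂⟩ := Metric.mem_nhdsWithin_iff.mp hyb
  have hhcont : ContinuousAt h B :=
    (hhd B ⟨by linarith, by linarith⟩).continuousAt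
  have hhb : ∀ᶠ u in 𝓝 B, h u ∈ Metric.ball y ρ :=
    hhcont.eventually_mem (by rw [hh0]; exact Metric.ball_mem_nhds y hρ)
  obtain ⟨δ₃, hδ₃, hball₃⟩ := Metric.mem_nhds_iff.mp hhb
  set m := min (min ρ ε₁) (min δ₂ δ₃) with hmdef
  have hm : 0 < m := lt_min (lt_min hρ hε₁) (lt_min hδ₂ hδ₃)
  have hmρ : m ≤ ρ := (min_le_left _ _).trans (min_le_left _ _)
  have hmε₁ : m ≤ ε₁ := (min_le_left _ _).trans (min_le_right _ _)
  have hmδ₂ : m ≤ δ₂ := (min_le_right _ _).trans (min_le_left _ _)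
  have hmδ₃ : m ≤ δ₃ := (min_le_right _ _).trans (min_le_right _ _)
  set t₁ := max T₀ (B - m / 2) with ht₁def
  have ht₁B : t₁ < B := max_lt hT₀B (by linarith)
  have ht₁T₀ : T₀ ≤ t₁ := le_max_left _ _
  have ht₁m : B - m / 2 ≤ t₁ := le_max_right _ _
  have hγmem : ∀ u, t₁ < u → u < B → γ u ∈ Metric.ball y ρ := by
    intro u h1 h2
    apply hball₂
    constructor
    · rw [Metric.mem_ball, Real.dist_eq, abs_of_neg (by linarith)]
      linarith
    · exact ⟨ht₁T₀.trans h1.le, h2⟩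
  have hhmem : ∀ u, t₁ < u → u ≤ B → h u ∈ Metric.ball y ρ := by
    intro u h1 h2
    apply hball₃
    rw [Metric.mem_ball, Real.dist_eq, abs_lt]
    constructor <;> linarith
  set γb : ℝ → E := fun u => if u < B then γ u else y with hγbdef
  have hγbB : γb B = y := by rw [hγbdef]; simp
  have hEq : Set.EqOn γb h (Set.Icc t₁ B) := by
    apply ODE_solution_unique_of_mem_Icc_left (v := fun t p => v p t) (s := s) (fun t _ => hvlip t)
    · -- ContinuousOn γb
      intro u hu
      rcases lt_or_eq_of_le hu.2 with hub | hub
      · have heqγ : γb =ᶠ[𝓝 u] γ :=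
          eventually_of_mem (Iio_mem_nhds hub) (fun w hw => if_pos hw)
        exact ((hγ u ⟨lt_of_lt_of_le hAT₀ (ht₁T₀.trans hu.1), hub⟩).continuousAt.congr
          heqγ.symm).continuousWithinAt
      · subst hub
        rw [ContinuousWithinAt, hγbB]
        have hdecomp : Set.Icc t₁ u = Set.Ico t₁ u ∪ {u} := by
          rw [Set.Ico_union_right ht₁B.le]
        rw [hdecomp, nhdsWithin_union, tendsto_sup]
        constructor
        · have hmono : 𝓝[Set.Ico t₁ u] u ≤ 𝓝[Set.Ico T₀ u] u :=
            nhdsWithin_mono _ (fun w hw => ⟨ht₁T₀.trans hw.1, hw.2⟩)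
          refine Filter.Tendsto.congr' ?_ (hy.mono_left hmono)
          exact eventually_nhdsWithin_of_forall (fun w hw => (if_pos hw.2).symm)
        · rw [nhdsWithin_singleton]
          simpa [hγbB] using tendsto_pure_nhds γb u
    · -- derivatives of γb
      intro t ht
      rcases lt_or_eq_of_le ht.2 with htB | htB
      · have heqγ : γb =ᶠ[𝓝 t] γ :=
          eventually_of_mem (Iio_mem_nhds htB) (fun w hw => if_pos hw)
        have hd := (hγ t ⟨hAT₀.trans (ht₁T₀.trans_lt ht.1), htB⟩).congr_of_eventuallyEq
          heqγ
        have hval : γb t = γ t := if_pos htB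
        rw [hval]
        exact hd.hasDerivWithinAt
      · subst htB
        have hd := my_deriv_endpoint v hv.continuous hT₀B hIco hy
        rw [hγbB]
        exact hd
    · -- membership of γb
      intro t ht
      rcases lt_or_eq_of_le ht.2 with htB | htB
      · refine ⟨?_, ?_⟩
        · have hval : γb t = γ t := if_pos htB
          rw [hval]
          exact Metric.mem_ball.mp (hγmem t ht.1 htB)
        · rw [Real.dist_eq, abs_of_neg (by linarith : t - B < 0)]
          have := ht.1
          have h5 : B - m / 2 ≤ t₁ := ht₁m
          linarith
      · subst htB
        rw [hγbB]
        exact ⟨by simpa using hρ, by simpa using hρ⟩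
    · -- ContinuousOn h
      intro u hu
      refine ((hhd u ⟨?_, ?_⟩).continuousAt).continuousWithinAt
      · have := hu.1; linarith
      · have := hu.2; linarith
    · -- derivatives of h
      intro t ht
      refine (hhd t ⟨?_, ?_⟩).hasDerivWithinAt
      · have := ht.1; linarith
      · have := ht.2; linarith
    · -- membership of h
      intro t ht
      refine ⟨Metric.mem_ball.mp (hhmem t ht.1 ht.2), ?_⟩
      rcases lt_or_eq_of_le ht.2 with htB | htB
      · rw [Real.dist_eq, abs_of_neg (by linarith : t - B < 0)]
        have := ht.1
        linarith
      · subst htB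
        simpa using hρ
    · rw [hγbB, hh0]
  -- glue
  set γ'' : ℝ → E := fun u => if u < B then γ u else h u with hγ''def
  refine ⟨ε₁, hε₁, γ'', fun u hu => if_pos hu.2, ?_⟩
  intro t ht
  rcases lt_trichotomy t B with h1 | h1 | h1
  · have heqγ : γ'' =ᶠ[𝓝 t] γ :=
      eventually_of_mem (Iio_mem_nhds h1) (fun w hw => if_pos hw)
    have hd := (hγ t ⟨ht.1, h1⟩).congr_of_eventuallyEq heqγ
    have hval : γ'' t = γ t := if_pos h1
    rw [hval]
    exact hd
  · subst h1
    have heqh : γ'' =ᶠ[𝓝 t] h := by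
      refine eventually_of_mem (Ioo_mem_nhds ht₁B (by linarith : t < t + ε₁)) ?_
      intro w hw
      by_cases hwB : w < t
      · have h2 : γb w = h w := hEq ⟨hw.1.le, hwB.le⟩
        have h3 : γb w = γ w := if_pos hwB
        have h4 : γ'' w = γ w := if_pos hwB
        rw [h4, ← h3, h2]
      · simp only [hγ''def]
        rw [if_neg hwB]
    have hd := (hhd t ⟨by linarith, by linarith⟩).congr_of_eventuallyEq heqh
    have hval : γ'' t = h t := if_neg (lt_irrefl t)
    rw [hval]
    exact hd
  · have heqh : γ'' =ᶠ[𝓝 t] h :=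
      eventually_of_mem (Ioi_mem_nhds h1) (fun w hw => if_neg (not_lt.mpr (le_of_lt hw)))
    have hd := (hhd t ⟨by linarith, ht.2⟩).congr_of_eventuallyEq heqh
    have hval : γ'' t = h t := if_neg (not_lt.mpr h1.le)
    rw [hval]
    exact hd

lemma my_extend_left [CompleteSpace E] (v : E → ℝ → E)
    (hv : ContDiff ℝ 1 (fun q : E × ℝ => v q.1 q.2))
    (C₀ C₁ : ℝ → ℝ) (hC₀c : Continuous C₀) (hC₁c : Continuous C₁)
    (hC₀ : ∀ t, 0 < C₀ t) (hC₁ : ∀ t, 0 < C₁ t)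
    (hgrowth : ∀ (p : E) (t : ℝ), ‖v p t‖ ≤ C₀ t + C₁ t * ‖p‖)
    {A B : ℝ} (hAB : A < B) {γ : ℝ → E}
    (hγ : ∀ t ∈ Set.Ioo A B, HasDerivAt γ (v (γ t) t) t) :
    ∃ ε > (0:ℝ), ∃ γ' : ℝ → E, Set.EqOn γ' γ (Set.Ioo A B) ∧
      ∀ t ∈ Set.Ioo (A - ε) B, HasDerivAt γ' (v (γ' t) t) t := by
  set w : E → ℝ → E := fun p s => -(v p (-s)) with hwdef
  have hwc : ContDiff ℝ 1 (fun q : E × ℝ => w q.1 q.2) := by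
    have h1 : ContDiff ℝ 1 (fun q : E × ℝ => ((q.1, -q.2) : E × ℝ)) :=
      contDiff_fst.prodMk contDiff_snd.neg
    exact (hv.comp h1).neg
  have hrefl : ∀ (δ : ℝ → E) (P Q : ℝ),
      (∀ t ∈ Set.Ioo P Q, HasDerivAt δ (v (δ t) t) t) →
      ∀ s ∈ Set.Ioo (-Q) (-P), HasDerivAt (fun r => δ (-r)) (w (δ (-s)) s) s := by
    intro δ P Q hδ s hs
    have h1 : HasDerivAt (fun r : ℝ => -r) (-1) s := hasDerivAt_neg s
    have h2 : HasDerivAt δ (v (δ (-s)) (-s)) (-s) :=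
      hδ (-s) ⟨by linarith [hs.2], by linarith [hs.1]⟩
    have h3 := HasDerivAt.scomp s h2 h1
    simpa [hwdef, neg_one_smul, Function.comp_def] using h3
  obtain ⟨ε, hε, δ', hδeq, hδ'⟩ := my_extend_right w hwc (fun s => C₀ (-s)) (fun s => C₁ (-s))
    (hC₀c.comp continuous_neg) (hC₁c.comp continuous_neg) (fun s => hC₀ (-s)) (fun s => hC₁ (-s))
    (fun p s => by simpa [hwdef] using hgrowth p (-s))
    (show -B < -A by linarith) (hrefl γ A B hγ)
  refine ⟨ε, hε, fun t => δ' (-t), ?_, ?_⟩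
  · intro t ht
    have h1 := hδeq (show -t ∈ Set.Ioo (-B) (-A) from ⟨by linarith [ht.2], by linarith [ht.1]⟩)
    simpa using h1
  · intro t ht
    have h1 : -t ∈ Set.Ioo (-B) (-A + ε) := ⟨by linarith [ht.2], by linarith [ht.1]⟩
    have h2 := hδ' (-t) h1
    have h3 : HasDerivAt (fun r : ℝ => -r) (-1) t := hasDerivAt_neg t
    have h4 := HasDerivAt.scomp t h2 h3
    have h5 : (-1 : ℝ) • w (δ' (-t)) (-t) = v (δ' (-t)) t := by
      simp [hwdef, neg_one_smul]
    rw [h5] at h4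
    exact h4

/-- glue solutions on nested intervals -/

lemma my_glue [CompleteSpace E] (v : E → ℝ → E)
    (hv : ContDiff ℝ 1 (fun q : E × ℝ => v q.1 q.2))
    (x₀ : E) (t₀ R : ℝ) (g : ℝ → ℝ → E)
    (hg : ∀ r < R, g r t₀ = x₀ ∧
      ∀ t ∈ Set.Ioo (t₀ - r) (t₀ + r), HasDerivAt (g r) (v (g r t) t) t)
    (hR : 0 < R) :
    ∃ γ : ℝ → E, γ t₀ = x₀ ∧
      ∀ t ∈ Set.Ioo (t₀ - R) (t₀ + R), HasDerivAt γ (v (γ t) t) t := by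
  set γ : ℝ → E := fun t => g ((|t - t₀| + R) / 2) t with hγdef
  have hcons : ∀ r, 0 ≤ r → r < R → Set.EqOn γ (g r) (Set.Ioo (t₀ - r) (t₀ + r)) := by
    intro r hr0 hrR t ht
    have habs : |t - t₀| < r := by
      rw [abs_lt]; constructor <;> [linarith [ht.1]; linarith [ht.2]]
    set m := (|t - t₀| + R) / 2 with hmdef
    have hm1 : |t - t₀| < m := by
      rw [hmdef]; have := habs.trans hrR; linarith
    have hm2 : m < R := by rw [hmdef]; have := habs.trans hrR; linarith
    set q := min m r with hqdef
    have hq1 : |t - t₀| < q := lt_min hm1 habs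
    have hq0 : 0 < q := lt_of_le_of_lt (abs_nonneg _) hq1
    have ht₀q : t₀ ∈ Set.Ioo (t₀ - q) (t₀ + q) := ⟨by linarith, by linarith⟩
    have hsub1 : Set.Ioo (t₀ - q) (t₀ + q) ⊆ Set.Ioo (t₀ - m) (t₀ + m) := by
      apply Set.Ioo_subset_Ioo <;> [linarith [min_le_left m r]; linarith [min_le_left m r]]
    have hsub2 : Set.Ioo (t₀ - q) (t₀ + q) ⊆ Set.Ioo (t₀ - r) (t₀ + r) := by
      apply Set.Ioo_subset_Ioo <;> [linarith [min_le_right m r]; linarith [min_le_right m r]]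
    have h1 := (hg m hm2).2
    have h2 := (hg r hrR).2
    have heq0 : g m t₀ = g r t₀ := by rw [(hg m hm2).1, (hg r hrR).1]
    have := my_uniq_s6 v hv ht₀q (fun u hu => h1 u (hsub1 hu)) (fun u hu => h2 u (hsub2 hu)) heq0
    have htmem : t ∈ Set.Ioo (t₀ - q) (t₀ + q) := by
      constructor <;> [linarith [abs_lt.mp hq1]; linarith [(abs_lt.mp hq1).2]]
    · have h3 := this htmem
      rw [hγdef]
      exact h3
  refine ⟨γ, ?_, ?_⟩
  · show g ((|t₀ - t₀| + R) / 2) t₀ = x₀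
    rw [sub_self, abs_zero, zero_add]
    exact (hg (R / 2) (by linarith)).1
  · intro t ht
    have habs : |t - t₀| < R := by
      rw [abs_lt]; constructor <;> [linarith [ht.1]; linarith [ht.2]]
    set r := (|t - t₀| + R) / 2 with hrdef
    have hr1 : |t - t₀| < r := by rw [hrdef]; linarith
    have hr2 : r < R := by rw [hrdef]; linarith
    have hr0 : 0 ≤ r := le_trans (abs_nonneg _) hr1.le
    have htmem : t ∈ Set.Ioo (t₀ - r) (t₀ + r) := by
      constructor <;> [linarith [(abs_lt.mp hr1).1]; linarith [(abs_lt.mp hr1).2]]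
    have heqn : γ =ᶠ[𝓝 t] g r :=
      eventually_of_mem (isOpen_Ioo.mem_nhds htmem) (hcons r hr0 hr2)
    have hd := ((hg r hr2).2 t htmem).congr_of_eventuallyEq heqn
    have hval : γ t = g r t := hcons r hr0 hr2 htmem
    rw [hval]
    exact hd

lemma my_global_s6 [CompleteSpace E] (v : E → ℝ → E)
    (hv : ContDiff ℝ 1 (fun q : E × ℝ => v q.1 q.2))
    (C₀ C₁ : ℝ → ℝ) (hC₀c : Continuous C₀) (hC₁c : Continuous C₁)
    (hC₀ : ∀ t, 0 < C₀ t) (hC₁ : ∀ t, 0 < C₁ t)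
    (hgrowth : ∀ (p : E) (t : ℝ), ‖v p t‖ ≤ C₀ t + C₁ t * ‖p‖)
    (x₀ : E) (t₀ : ℝ) :
    ∃ γ : ℝ → E, γ t₀ = x₀ ∧ ∀ t : ℝ, HasDerivAt γ (v (γ t) t) t := by
  set S : Set ℝ := {r | ∃ γ : ℝ → E, γ t₀ = x₀ ∧
    ∀ t ∈ Set.Ioo (t₀ - r) (t₀ + r), HasDerivAt γ (v (γ t) t) t} with hSdef
  obtain ⟨ε₀, hε₀, γ₀, hγ₀0, hγ₀d⟩ := my_loc_ex v hv x₀ t₀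
  have hε₀S : ε₀ ∈ S := ⟨γ₀, hγ₀0, hγ₀d⟩
  have hdown : ∀ r s : ℝ, r ≤ s → s ∈ S → r ∈ S := by
    rintro r s hrs ⟨γ, h0, hd⟩
    exact ⟨γ, h0, fun t ht => hd t ⟨by linarith [ht.1], by linarith [ht.2]⟩⟩
  have hunbdd : ¬ BddAbove S := by
    intro hbdd
    set R := sSup S with hRdef
    have hSne : S.Nonempty := ⟨ε₀, hε₀S⟩
    have hR0 : 0 < R := lt_of_lt_of_le hε₀ (le_csSup hbdd hε₀S)
    have hall : ∀ r < R, r ∈ S := by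
      intro r hr
      obtain ⟨s, hsS, hrs⟩ := exists_lt_of_lt_csSup hSne hr
      exact hdown r s hrs.le hsS
    have hch : ∀ r, ∃ γ : ℝ → E, r < R → (γ t₀ = x₀ ∧
        ∀ t ∈ Set.Ioo (t₀ - r) (t₀ + r), HasDerivAt γ (v (γ t) t) t) := by
      intro r
      by_cases h : r < R
      · obtain ⟨γ, h1, h2⟩ := hall r h
        exact ⟨γ, fun _ => ⟨h1, h2⟩⟩
      · exact ⟨fun _ => x₀, fun hr => absurd hr h⟩
    choose g hg using hch
    obtain ⟨γR, hγR0, hγRd⟩ := my_glue v hv x₀ t₀ R g (fun r hr => hg r hr) hR0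
    obtain ⟨ε₁, hε₁, γ1, heq1, hd1⟩ := my_extend_right v hv C₀ C₁ hC₀c hC₁c hC₀ hC₁ hgrowth
      (show t₀ - R < t₀ + R by linarith) hγRd
    obtain ⟨ε₂, hε₂, γ2, heq2, hd2⟩ := my_extend_left v hv C₀ C₁ hC₀c hC₁c hC₀ hC₁ hgrowth
      (show t₀ - R < t₀ + R + ε₁ by linarith) hd1
    have hγ20 : γ2 t₀ = x₀ := by
      rw [heq2 ⟨by linarith, by linarith⟩, heq1 ⟨by linarith, by linarith⟩, hγR0]
    have hmin : 0 < min ε₁ ε₂ := lt_min hε₁ hε₂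
    have hR'S : R + min ε₁ ε₂ ∈ S := by
      refine ⟨γ2, hγ20, fun t ht => hd2 t ⟨?_, ?_⟩⟩
      · have := min_le_right ε₁ ε₂; have := ht.1; linarith
      · have := min_le_left ε₁ ε₂; have := ht.2; linarith
    have := le_csSup hbdd hR'S
    linarith
  have hallS : ∀ r : ℝ, ∃ γ : ℝ → E, γ t₀ = x₀ ∧
      ∀ t ∈ Set.Ioo (t₀ - r) (t₀ + r), HasDerivAt γ (v (γ t) t) t := by
    intro r
    obtain ⟨s, hsS, hrs⟩ := not_bddAbove_iff.mp hunbdd r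
    exact hdown r s hrs.le hsS
  choose g hg using hallS
  set γ : ℝ → E := fun t => g (|t - t₀| + 1) t with hγdef
  have hcons : ∀ r : ℝ, Set.EqOn γ (g r) (Set.Ioo (t₀ - r) (t₀ + r)) := by
    intro r t ht
    have habs : |t - t₀| < r := by
      rw [abs_lt]; constructor <;> [linarith [ht.1]; linarith [ht.2]]
    set m := |t - t₀| + 1 with hmdef
    have hm1 : |t - t₀| < m := by rw [hmdef]; linarith
    set q := min m r with hqdef
    have hq1 : |t - t₀| < q := lt_min hm1 habs
    have hq0 : 0 < q := lt_of_le_of_lt (abs_nonneg _) hq1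
    have ht₀q : t₀ ∈ Set.Ioo (t₀ - q) (t₀ + q) := ⟨by linarith, by linarith⟩
    have hsub1 : Set.Ioo (t₀ - q) (t₀ + q) ⊆ Set.Ioo (t₀ - m) (t₀ + m) := by
      apply Set.Ioo_subset_Ioo <;> [linarith [min_le_left m r]; linarith [min_le_left m r]]
    have hsub2 : Set.Ioo (t₀ - q) (t₀ + q) ⊆ Set.Ioo (t₀ - r) (t₀ + r) := by
      apply Set.Ioo_subset_Ioo <;> [linarith [min_le_right m r]; linarith [min_le_right m r]]
    have heq0 : g m t₀ = g r t₀ := by rw [(hg m).1, (hg r).1]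
    have huni := my_uniq_s6 v hv ht₀q (fun u hu => (hg m).2 u (hsub1 hu))
      (fun u hu => (hg r).2 u (hsub2 hu)) heq0
    have htmem : t ∈ Set.Ioo (t₀ - q) (t₀ + q) := by
      constructor <;> [linarith [(abs_lt.mp hq1).1]; linarith [(abs_lt.mp hq1).2]]
    exact huni htmem
  refine ⟨γ, ?_, ?_⟩
  · show g (|t₀ - t₀| + 1) t₀ = x₀
    rw [sub_self, abs_zero, zero_add]
    exact (hg 1).1
  · intro t
    set r := |t - t₀| + 1 with hrdef
    have habs : |t - t₀| < r := by rw [hrdef]; linarith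
    have htmem : t ∈ Set.Ioo (t₀ - r) (t₀ + r) := by
      constructor <;> [linarith [(abs_lt.mp habs).1]; linarith [(abs_lt.mp habs).2]]
    have heqn : γ =ᶠ[𝓝 t] g r :=
      eventually_of_mem (isOpen_Ioo.mem_nhds htmem) (hcons r)
    have hd := ((hg r).2 t htmem).congr_of_eventuallyEq heqn
    have hval : γ t = g r t := hcons r htmem
    rw [hval]
    exact hd

end Helpers

/-- A time-dependent `C¹` vector field on a Banach space with at most linear growth along finite
times (time-dependent continuous coefficients) has globally defined solutions. -/
theorem stmt_6 {E : Type*} [NormedAddCommGroup E] [NormedSpace ℝ E] [CompleteSpace E]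
    (X : E → ℝ → E) (hX : ContDiff ℝ 1 (fun q : E × ℝ => X q.1 q.2))
    (C₀ C₁ : ℝ → ℝ) (hC₀c : Continuous C₀) (hC₁c : Continuous C₁)
    (hC₀ : ∀ t, 0 < C₀ t) (hC₁ : ∀ t, 0 < C₁ t)
    (hgrowth : ∀ (p : E) (t : ℝ), ‖X p t‖ ≤ C₀ t + C₁ t * ‖p‖)
    (a b : ℝ) (c : ℝ → E)
    (hc : ∀ t ∈ Set.Ioo a b, HasDerivAt c (X (c t) t) t) :
    ∃ c' : ℝ → E, (∀ t ∈ Set.Ioo a b, c' t = c t) ∧ ∀ t : ℝ, HasDerivAt c' (X (c' t) t) t := by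
  rcases Set.eq_empty_or_nonempty (Set.Ioo a b) with hemp | ⟨t₀, ht₀⟩
  · obtain ⟨c', h0, hd⟩ := my_global_s6 X hX C₀ C₁ hC₀c hC₁c hC₀ hC₁ hgrowth 0 0
    exact ⟨c', fun t ht => absurd (hemp ▸ ht) (Set.notMem_empty t), hd⟩
  · obtain ⟨c', h0, hd⟩ := my_global_s6 X hX C₀ C₁ hC₀c hC₁c hC₀ hC₁ hgrowth (c t₀) t₀
    refine ⟨c', ?_, hd⟩
    exact fun t ht => my_uniq_s6 X hX ht₀ (fun s _ => hd s) hc h0 ht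
end

section
/- Let γ : [0,b) → H be a C² curve in a Hilbert space with b < ∞, let u(t) = ‖γ'(t)‖², and suppose there are constants A₀, A₁, A₂ > 0 and a C¹ function t ↦ V(γ(t),t) such that d/dt(u + 2V∘(γ,id))(t) ≤ A₀ + A₁ u(t) + A₂ ‖γ(t) − γ(0)‖² for all t, and −V(γ(t),t) ≤ A₀ + A₂‖γ(t) − γ(0)‖². Then u is bounded on [0,b). -/
open Set Real

/-- A priori velocity estimate: if `u = ‖γ'‖²` and `(u + 2V)' ≤ A₀ + A₁ u + A₂ ‖γ - γ(0)‖²`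
with `-V ≤ A₀ + A₂ ‖γ - γ(0)‖²` on `[0,b)`, `b < ∞`, then `u` is bounded on `[0,b)`. -/
theorem stmt_11 {H : Type*} [NormedAddCommGroup H] [InnerProductSpace ℝ H] [CompleteSpace H]
    (b : ℝ) (hb : 0 < b)
    (γ dγ : ℝ → H)
    (hγ : ∀ t ∈ Set.Ico (0:ℝ) b, HasDerivAt γ (dγ t) t)
    (hdγ : ContinuousOn dγ (Set.Ico (0:ℝ) b))
    (W : ℝ → ℝ) -- `W t = V (γ t, t)`
    (A₀ A₁ A₂ : ℝ) (hA₀ : 0 < A₀) (hA₁ : 0 < A₁) (hA₂ : 0 < A₂)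
    (hineq : ∀ t ∈ Set.Ico (0:ℝ) b, ∃ D : ℝ,
      HasDerivAt (fun s => ‖dγ s‖ ^ 2 + 2 * W s) D t ∧
      D ≤ A₀ + A₁ * ‖dγ t‖ ^ 2 + A₂ * ‖γ t - γ 0‖ ^ 2)
    (hW : ∀ t ∈ Set.Ico (0:ℝ) b, -W t ≤ A₀ + A₂ * ‖γ t - γ 0‖ ^ 2) :
    ∃ K : ℝ, ∀ t ∈ Set.Ico (0:ℝ) b, ‖dγ t‖ ^ 2 ≤ K := by
  classical
  set B : ℝ := 2 * A₂ + 1 with hB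
  set M : ℝ := A₁ + A₂ + 2 * B with hM
  have hBpos : 0 < B := by positivity
  have hMpos : 0 < M := by positivity
  -- the comparison function
  set F : ℝ → ℝ := fun s => (‖dγ s‖ ^ 2 + 2 * W s) + 2 * A₀ + B * ‖γ s - γ 0‖ ^ 2 with hF
  -- pointwise bounds
  have huF : ∀ t ∈ Set.Ico (0:ℝ) b, ‖dγ t‖ ^ 2 ≤ F t := by
    intro t ht
    have h1 := hW t ht
    have h2 : (0:ℝ) ≤ ‖γ t - γ 0‖ ^ 2 := by positivity
    simp only [hF, hB]
    nlinarith
  have hφF : ∀ t ∈ Set.Ico (0:ℝ) b, ‖γ t - γ 0‖ ^ 2 ≤ F t := by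
    intro t ht
    have h1 := hW t ht
    have h2 : (0:ℝ) ≤ ‖dγ t‖ ^ 2 := by positivity
    simp only [hF, hB]
    nlinarith
  have hFnn : ∀ t ∈ Set.Ico (0:ℝ) b, 0 ≤ F t := fun t ht =>
    le_trans (by positivity) (huF t ht)
  -- derivative of F with bound
  have hFderiv : ∀ t ∈ Set.Ico (0:ℝ) b, ∃ D : ℝ,
      HasDerivAt F D t ∧ D ≤ M * F t + A₀ := by
    intro t ht
    obtain ⟨D, hD, hDle⟩ := hineq t ht
    have hc : HasDerivAt (fun s => γ s - γ 0) (dγ t) t := (hγ t ht).sub_const _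
    have hφ' : HasDerivAt (fun s => ‖γ s - γ 0‖ ^ 2)
        (inner ℝ (γ t - γ 0) (dγ t) + inner ℝ (dγ t) (γ t - γ 0) : ℝ) t := by
      have := HasDerivAt.inner ℝ hc hc
      simpa only [real_inner_self_eq_norm_sq] using this
    refine ⟨D + B * (inner ℝ (γ t - γ 0) (dγ t) + inner ℝ (dγ t) (γ t - γ 0) : ℝ),
      ?_, ?_⟩
    · exact ((hD.add_const (2 * A₀)).add (hφ'.const_mul B))
    · have hsym : (inner ℝ (dγ t) (γ t - γ 0) : ℝ) = inner ℝ (γ t - γ 0) (dγ t) :=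
        real_inner_comm _ _
      have hcs : (inner ℝ (γ t - γ 0) (dγ t) : ℝ) ≤ ‖γ t - γ 0‖ * ‖dγ t‖ :=
        real_inner_le_norm _ _
      have hamgm : 2 * (‖γ t - γ 0‖ * ‖dγ t‖) ≤ ‖γ t - γ 0‖ ^ 2 + ‖dγ t‖ ^ 2 := by
        nlinarith [sq_nonneg (‖γ t - γ 0‖ - ‖dγ t‖)]
      have h1 := huF t ht
      have h2 := hφF t ht
      simp only [hM]
      nlinarith
  -- continuity of F on [0, b)
  have hFcont : ContinuousOn F (Set.Ico (0:ℝ) b) := by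
    intro t ht
    obtain ⟨D, hD, -⟩ := hFderiv t ht
    exact hD.continuousAt.continuousWithinAt
  -- Gronwall on each [0, t]
  set K : ℝ := F 0 * Real.exp (M * b) + A₀ / M * Real.exp (M * b) with hK
  refine ⟨K, fun t ht => ?_⟩
  have h0b : (0:ℝ) ∈ Set.Ico (0:ℝ) b := ⟨le_refl _, hb⟩
  have hsub : Set.Icc (0:ℝ) t ⊆ Set.Ico (0:ℝ) b := fun s hs =>
    ⟨hs.1, lt_of_le_of_lt hs.2 ht.2⟩
  have gron : ∀ x ∈ Set.Icc (0:ℝ) t, F x ≤ gronwallBound (F 0) M A₀ (x - 0) := by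
    apply le_gronwallBound_of_liminf_deriv_right_le
      (f' := fun s => if h : s ∈ Set.Ico (0:ℝ) b then (hFderiv s h).choose else 0)
    · exact hFcont.mono hsub
    · intro x hx r hr
      have hx' : x ∈ Set.Ico (0:ℝ) b := hsub ⟨hx.1, le_of_lt hx.2⟩
      have hD := (hFderiv x hx').choose_spec.1
      rw [dif_pos hx'] at hr
      have := hD.hasDerivWithinAt (s := Set.Ici x)
      have hfreq := this.liminf_right_slope_le hr
      refine hfreq.mono fun z hz => ?_
      simpa [slope_def_field, div_eq_inv_mul] using hz
    · exact le_refl _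
    · intro x hx
      have hx' : x ∈ Set.Ico (0:ℝ) b := hsub ⟨hx.1, le_of_lt hx.2⟩
      rw [dif_pos hx']
      exact (hFderiv x hx').choose_spec.2
  have hFt : F t ≤ gronwallBound (F 0) M A₀ (t - 0) :=
    gron t ⟨ht.1, le_refl _⟩
  have hgb : gronwallBound (F 0) M A₀ (t - 0) ≤ K := by
    rw [gronwallBound_of_K_ne_0 (ne_of_gt hMpos), sub_zero]
    have hexp : Real.exp (M * t) ≤ Real.exp (M * b) :=
      Real.exp_le_exp.2 (by nlinarith [ht.1, ht.2.le])
    have hexp0 : (0:ℝ) < Real.exp (M * t) := Real.exp_pos _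
    have hF0 : 0 ≤ F 0 := hFnn 0 h0b
    have hAM : (0:ℝ) ≤ A₀ / M := by positivity
    have h1 : F 0 * Real.exp (M * t) ≤ F 0 * Real.exp (M * b) :=
      mul_le_mul_of_nonneg_left hexp hF0
    have h2 : A₀ / M * (Real.exp (M * t) - 1) ≤ A₀ / M * Real.exp (M * b) := by
      nlinarith
    exact add_le_add h1 h2
  exact le_trans (huF t ht) (le_trans hFt hgb)
end
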